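/- arXiv:2310.15703 — 6 statements merged into one kernel-verified Lean document; each statement's English description precedes it below -/
import Mathlib

section
/- Let C_1,…,C_s be nonzero F_q-linear subspaces of F_q^m and let A be an s×h matrix over F_q of full rank s, with s ≤ h. For 1 ≤ i ≤ s let 𝒜_i ⊆ F_q^h be the linear code generated by the first i rows of A, and let C = [C_1,…,C_s]·A. Then the minimum distance of C satisfies d(C) ≥ min{ d(C_1)d(𝒜_1), d(C_2)d(𝒜_2), …, d(C_s)d(𝒜_s) }. Moreover, if the codes are nested, C_1 ⊇ C_2 ⊇ ⋯ ⊇ C_s, then equality holds. -/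
/-- Minimum distance (minimum Hamming weight of a nonzero element) of a set of vectors. -/
noncomputable def dminS {F : Type*} [DecidableEq F] [Zero F] {n : Type*} [Fintype n]
    (C : Set (n → F)) : ℕ :=
  sInf { w | ∃ c ∈ C, c ≠ 0 ∧ hammingNorm c = w }

/-- Euclidean dual of a set of vectors. -/
def dualE {F : Type*} [Field F] {n : Type*} [Fintype n] (C : Set (n → F)) : Set (n → F) :=
  { x | ∀ c ∈ C, ∑ j, x j * c j = 0 }

/-- Hermitian dual (with respect to x ↦ x^q) of a set of vectors over F_{q^2}. -/
def dualH {F : Type*} [Field F] {n : Type*} [Fintype n] (q : ℕ) (C : Set (n → F)) :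
    Set (n → F) :=
  { x | ∀ c ∈ C, ∑ j, x j * (c j) ^ q = 0 }

/-- The matrix-product code `[C_1,…,C_s]·A` as a set of vectors indexed by `Fin h × Fin m`. -/
def mpcSet {F : Type*} [Field F] {s h m : ℕ}
    (C : Fin s → Set (Fin m → F)) (A : Matrix (Fin s) (Fin h) F) :
    Set (Fin h × Fin m → F) :=
  { p | ∃ v : Fin s → Fin m → F, (∀ i, v i ∈ C i) ∧ ∀ x, p x = ∑ i, A i x.1 * v i x.2 }

/-- A matrix is non-singular by columns. -/
def IsNSC {F : Type*} [Field F] {s h : ℕ} (A : Matrix (Fin s) (Fin h) F) : Prop :=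
  ∀ (i : ℕ) (hi : i ≤ s), 0 < i → ∀ c : Fin i → Fin h, StrictMono c →
    (Matrix.of fun r t : Fin i => A (Fin.castLE hi r) (c t)).det ≠ 0

/-- Punctured code: projection of `C` onto the coordinates in `R`. -/
def punct {F : Type*} {n : Type*} (C : Set (n → F)) (R : Finset n) :
    Set ({x // x ∈ R} → F) :=
  (fun c (t : {x // x ∈ R}) => c t.1) '' C

/-- `R` is an (r,δ)-extended recovery set for coordinate `i` of the code `C`. -/
def IsRecSet {F : Type*} [DecidableEq F] [Zero F] {n : Type*} [Fintype n]
    (C : Set (n → F)) (r δ : ℕ) (i : n) (R : Finset n) : Prop :=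
  i ∈ R ∧ R.card ≤ r + δ - 1 ∧ δ ≤ dminS (punct C R)

/-- `C` is a locally recoverable code with locality (r,δ). -/
def IsLRC {F : Type*} [DecidableEq F] [Zero F] {n : Type*} [Fintype n]
    (C : Set (n → F)) (r δ : ℕ) : Prop :=
  ∀ i : n, ∃ R : Finset n, IsRecSet C r δ i R

/-- `wv α i` is the evaluation of the monomial `X^(i-1)` at all points of the field,
enumerated by `α`. -/
def wv {F : Type*} [Field F] {q : ℕ} (α : Fin q ≃ F) (i : ℕ) : Fin q → F :=
  fun j => (α j) ^ (i - 1)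

/-- `av α p i` : the vectors `a_i`, with `a_i = w_i` for `i < q` and
`a_q = w_q + ((p-1)/2) • w_1`. -/
def av {F : Type*} [Field F] {q : ℕ} (α : Fin q ≃ F) (p : ℕ) (i : ℕ) : Fin q → F :=
  if i = q then wv α q + (((p - 1) / 2 : ℕ) : F) • wv α 1 else wv α i

/-- The square matrix whose rows are `a_1, …, a_q`. -/
def Adot {F : Type*} [Field F] {q : ℕ} (α : Fin q ≃ F) (p : ℕ) : Matrix (Fin q) (Fin q) F :=
  Matrix.of fun r j => av α p ((r : ℕ) + 1) j


open Finset

section Aux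
variable {F : Type*} [Field F] [DecidableEq F]

lemma dminS_le' {n : Type*} [Fintype n] {C : Set (n → F)} {c : n → F}
    (hc : c ∈ C) (h0 : c ≠ 0) : dminS C ≤ hammingNorm c :=
  Nat.sInf_le ⟨c, hc, h0, rfl⟩

lemma dminS_exists' {n : Type*} [Fintype n] {C : Set (n → F)}
    (h : ∃ c, c ∈ C ∧ c ≠ 0) : ∃ c ∈ C, c ≠ 0 ∧ hammingNorm c = dminS C := by
  obtain ⟨c, hc, h0⟩ := h
  have hne : {w | ∃ c ∈ C, c ≠ 0 ∧ hammingNorm c = w}.Nonempty := ⟨hammingNorm c, c, hc, h0, rfl⟩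
  exact Nat.sInf_mem hne

lemma hammingNorm_mul_prod' {h m : ℕ} (a : Fin h → F) (v : Fin m → F) :
    hammingNorm (fun x : Fin h × Fin m => a x.1 * v x.2) = hammingNorm a * hammingNorm v := by
  classical
  simp only [hammingNorm]
  rw [← Finset.card_product]
  congr 1
  ext ⟨t, x⟩
  simp [mul_ne_zero_iff]

lemma hammingNorm_prod_sum' {h m : ℕ} (c : Fin h × Fin m → F) :
    hammingNorm c = ∑ x : Fin m, hammingNorm (fun t : Fin h => c (t, x)) := by
  classical
  simp only [hammingNorm, Finset.card_filter]
  rw [Fintype.sum_prod_type_right]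

lemma rows_indep' {s h : ℕ} [Fintype F] (A : Matrix (Fin s) (Fin h) F) (hA : A.rank = s)
    (v : Fin s → F) (hv : ∀ t, ∑ i, A i t * v i = 0) : v = 0 := by
  classical
  set L : (Fin s → F) →ₗ[F] (Fin h → F) := A.transpose.mulVecLin with hL
  have hrange : Module.finrank F (LinearMap.range L) = s := by
    have := Matrix.rank_transpose A
    rw [hA] at this
    exact this
  have hker : Module.finrank F (LinearMap.ker L) = 0 := by
    have h1 := LinearMap.finrank_range_add_finrank_ker L
    rw [hrange, Module.finrank_fin_fun] at h1
    omega
  have hkb : LinearMap.ker L = ⊥ := Submodule.finrank_eq_zero.mp hker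
  have hvL : L v = 0 := by
    funext t
    simpa [L, Matrix.mulVecLin, Matrix.mulVec, Matrix.vecMul, dotProduct,
      Matrix.transpose_apply, mul_comm] using hv t
  have : v ∈ LinearMap.ker L := hvL
  rw [hkb] at this
  simpa using this

lemma mem_span_rows' {s h : ℕ} (A : Matrix (Fin s) (Fin h) F) (i : Fin s)
    (w : Fin s → F) (hw : ∀ j, ¬ j ≤ i → w j = 0) :
    (fun t => ∑ j, A j t * w j) ∈
      Submodule.span F {x : Fin h → F | ∃ j : Fin s, j ≤ i ∧ x = fun t => A j t} := by
  have heq : (fun t => ∑ j, A j t * w j) = ∑ j, w j • (fun t => A j t) := by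
    funext t
    simp [Finset.sum_apply, mul_comm]
  rw [heq]
  refine Submodule.sum_mem _ fun j _ => ?_
  by_cases hj : j ≤ i
  · exact Submodule.smul_mem _ _ (Submodule.subset_span ⟨j, hj, rfl⟩)
  · simp [hw j hj]

lemma span_rows_rep' {s h : ℕ} (A : Matrix (Fin s) (Fin h) F) (i : Fin s)
    (a : Fin h → F)
    (ha : a ∈ Submodule.span F {x : Fin h → F | ∃ j : Fin s, j ≤ i ∧ x = fun t => A j t}) :
    ∃ w : Fin s → F, (∀ j, ¬ j ≤ i → w j = 0) ∧ a = fun t => ∑ j, A j t * w j := by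
  classical
  set g : Fin s → (Fin h → F) := fun j => if j ≤ i then (fun t => A j t) else 0 with hg
  have hspan : Submodule.span F {x : Fin h → F | ∃ j : Fin s, j ≤ i ∧ x = fun t => A j t}
      ≤ Submodule.span F (Set.range g) := by
    apply Submodule.span_le.mpr
    rintro x ⟨j, hj, rfl⟩
    exact Submodule.subset_span ⟨j, by simp [hg, hj]⟩
  obtain ⟨c, hc⟩ := (Submodule.mem_span_range_iff_exists_fun F).mp (hspan ha)
  refine ⟨fun j => if j ≤ i then c j else 0, fun j hj => if_neg hj, ?_⟩
  rw [← hc]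
  funext t
  rw [Finset.sum_apply]
  refine Finset.sum_congr rfl fun j _ => ?_
  by_cases hj : j ≤ i <;> simp [hg, hj, mul_comm]

end Aux


/-- lower bound on the minimum distance of a matrix-product code, with
equality in the nested case. -/
theorem stmt2 {F : Type*} [Field F] [Fintype F] [DecidableEq F] {s h m : ℕ}
    (hs : 0 < s) (hsh : s ≤ h)
    (C : Fin s → Submodule F (Fin m → F)) (hnz : ∀ i, C i ≠ ⊥)
    (A : Matrix (Fin s) (Fin h) F) (hA : A.rank = s) :
    (sInf { v | ∃ i : Fin s, v = dminS ((C i : Set (Fin m → F))) *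
        dminS ((Submodule.span F { x | ∃ j : Fin s, j ≤ i ∧ x = fun t => A j t } :
          Submodule F (Fin h → F)) : Set (Fin h → F)) }
      ≤ dminS (mpcSet (fun i => (C i : Set (Fin m → F))) A)) ∧
    ((∀ i j : Fin s, i ≤ j → C j ≤ C i) →
      sInf { v | ∃ i : Fin s, v = dminS ((C i : Set (Fin m → F))) *
        dminS ((Submodule.span F { x | ∃ j : Fin s, j ≤ i ∧ x = fun t => A j t } :
          Submodule F (Fin h → F)) : Set (Fin h → F)) }
      = dminS (mpcSet (fun i => (C i : Set (Fin m → F))) A)) := by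
  classical
  set Ai : Fin s → Submodule F (Fin h → F) :=
    fun i => Submodule.span F { x | ∃ j : Fin s, j ≤ i ∧ x = fun t => A j t } with hAidef
  set dC : Fin s → ℕ := fun i => dminS ((C i : Set (Fin m → F))) with hdCdef
  set dA : Fin s → ℕ := fun i => dminS ((Ai i : Set (Fin h → F))) with hdAdef
  set S : Set ℕ := { v | ∃ i : Fin s, v = dC i * dA i } with hSdef
  set D : Set (Fin h × Fin m → F) := mpcSet (fun i => (C i : Set (Fin m → F))) A with hDdef
  -- rows are linearly independent
  have hindep : ∀ v : Fin s → F, (∀ t, ∑ i, A i t * v i = 0) → v = 0 := rows_indep' A hA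
  have hrow : ∀ i : Fin s, ∃ t, A i t ≠ 0 := by
    intro i
    by_contra hall
    push_neg at hall
    have h1 : (Pi.single i 1 : Fin s → F) = 0 := by
      apply hindep
      intro t
      rw [Finset.sum_eq_single i]
      · simp [hall t]
      · intro j _ hj; simp [Pi.single_apply, hj]
      · simp
    have := congrFun h1 i
    simp at this
  have hCex : ∀ i : Fin s, ∃ c ∈ (C i : Set (Fin m → F)), c ≠ 0 ∧ hammingNorm c = dC i := by
    intro i
    obtain ⟨x, hx, hx0⟩ := (Submodule.ne_bot_iff (C i)).mp (hnz i)
    exact dminS_exists' ⟨x, hx, hx0⟩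
  have hAex : ∀ i : Fin s, ∃ a ∈ (Ai i : Set (Fin h → F)), a ≠ 0 ∧ hammingNorm a = dA i := by
    intro i
    refine dminS_exists' ⟨fun t => A i t, ?_, ?_⟩
    · exact Submodule.subset_span ⟨i, le_refl i, rfl⟩
    · obtain ⟨t, ht⟩ := hrow i
      intro hz
      exact ht (congrFun hz t)
  -- the matrix-product code contains a nonzero element
  have hDex : ∃ p ∈ D, p ≠ 0 := by
    obtain ⟨v0, hv0, hv00, _⟩ := hCex ⟨0, hs⟩
    refine ⟨fun x => A ⟨0, hs⟩ x.1 * v0 x.2, ?_, ?_⟩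
    · refine ⟨fun j => if j = ⟨0, hs⟩ then v0 else 0, fun j => ?_, fun x => ?_⟩
      · by_cases hj : j = ⟨0, hs⟩
        · subst hj; simpa using hv0
        · simp only [hj, if_false]; exact (C j).zero_mem
      · rw [Finset.sum_eq_single (⟨0, hs⟩ : Fin s)]
        · simp
        · intro j _ hj; simp [hj]
        · simp
    · obtain ⟨t, ht⟩ := hrow ⟨0, hs⟩
      obtain ⟨x, hx⟩ := Function.ne_iff.mp hv00
      intro hz
      have := congrFun hz (t, x)
      simp only [Pi.zero_apply] at this
      exact (mul_ne_zero ht (by simpa using hx)) this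
  -- key lower bound per codeword
  have keyLB : ∀ c ∈ D, c ≠ 0 → ∃ i : Fin s, dC i * dA i ≤ hammingNorm c := by
    rintro c ⟨v, hvC, hcv⟩ h0
    have hvne : ∃ i, v i ≠ 0 := by
      by_contra hall
      push_neg at hall
      apply h0
      funext x
      rw [hcv x]
      simp [hall]
    set T : Finset (Fin s) := Finset.univ.filter (fun i => v i ≠ 0) with hTdef
    have hTne : T.Nonempty := ⟨hvne.choose, by simp [hTdef, hvne.choose_spec]⟩
    set ℓ : Fin s := T.max' hTne with hℓdef
    have hℓmem : v ℓ ≠ 0 := by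
      have := T.max'_mem hTne
      simpa [hTdef] using this
    have hgt : ∀ j, ¬ j ≤ ℓ → v j = 0 := by
      intro j hj
      by_contra hjne
      exact hj (T.le_max' j (by simp [hTdef, hjne]))
    refine ⟨ℓ, ?_⟩
    have claim1 : ∀ x : Fin m, v ℓ x ≠ 0 → dA ℓ ≤ hammingNorm (fun t => c (t, x)) := by
      intro x hx
      refine dminS_le' (C := (Ai ℓ : Set (Fin h → F))) ?_ ?_
      · have heq : (fun t => c (t, x)) = fun t => ∑ j, A j t * (fun j => v j x) j := by
          funext t; rw [hcv (t, x)]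
        rw [heq]
        exact mem_span_rows' A ℓ _ (fun j hj => by rw [hgt j hj]; rfl)
      · intro hb
        have hz : (fun j => v j x) = 0 := by
          apply hindep
          intro t
          have := congrFun hb t
          rw [hcv (t, x)] at this
          exact this
        exact hx (congrFun hz ℓ)
    have claim2 : dC ℓ ≤ hammingNorm (v ℓ) := dminS_le' (hvC ℓ) hℓmem
    have hnorm : hammingNorm (v ℓ) = (Finset.univ.filter (fun x => v ℓ x ≠ 0)).card := rfl
    calc
      dC ℓ * dA ℓ ≤ hammingNorm (v ℓ) * dA ℓ := Nat.mul_le_mul_right _ claim2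
      _ = ∑ _x ∈ Finset.univ.filter (fun x => v ℓ x ≠ 0), dA ℓ := by
          rw [Finset.sum_const, smul_eq_mul, hnorm]
      _ ≤ ∑ x ∈ Finset.univ.filter (fun x => v ℓ x ≠ 0), hammingNorm (fun t => c (t, x)) :=
          Finset.sum_le_sum (fun x hx => claim1 x (Finset.mem_filter.mp hx).2)
      _ ≤ ∑ x : Fin m, hammingNorm (fun t => c (t, x)) :=
          Finset.sum_le_sum_of_subset (Finset.subset_univ _)
      _ = hammingNorm c := (hammingNorm_prod_sum' c).symm
  -- part 1
  have part1 : sInf S ≤ dminS D := by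
    obtain ⟨c, hc, h0, hcw⟩ := dminS_exists' hDex
    obtain ⟨ℓ, hle⟩ := keyLB c hc h0
    calc sInf S ≤ dC ℓ * dA ℓ := Nat.sInf_le ⟨ℓ, rfl⟩
      _ ≤ hammingNorm c := hle
      _ = dminS D := hcw
  refine ⟨part1, fun hnest => ?_⟩
  -- upper bound in nested case
  have keyUB : ∀ i : Fin s, dminS D ≤ dC i * dA i := by
    intro i
    obtain ⟨v, hvC, hv0, hvn⟩ := hCex i
    obtain ⟨a, haA, ha0, han⟩ := hAex i
    obtain ⟨w, hw0, haw⟩ := span_rows_rep' A i a haA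
    have hpmem : (fun x : Fin h × Fin m => a x.1 * v x.2) ∈ D := by
      refine ⟨fun j => w j • v, fun j => ?_, fun x => ?_⟩
      · by_cases hj : j ≤ i
        · exact Submodule.smul_mem _ _ (hnest j i hj hvC)
        · show w j • v ∈ (C j : Set (Fin m → F))
          rw [hw0 j hj, zero_smul]
          exact (C j).zero_mem
      · show a x.1 * v x.2 = ∑ j, A j x.1 * (fun j => w j • v) j x.2
        rw [congrFun haw x.1, Finset.sum_mul]
        exact Finset.sum_congr rfl fun j _ => by simp [mul_assoc]
    have hp0 : (fun x : Fin h × Fin m => a x.1 * v x.2) ≠ 0 := by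
      obtain ⟨t, ht⟩ := Function.ne_iff.mp ha0
      obtain ⟨x, hx⟩ := Function.ne_iff.mp hv0
      intro hz
      have := congrFun hz (t, x)
      simp only [Pi.zero_apply] at this
      exact mul_ne_zero (by simpa using ht) (by simpa using hx) this
    calc dminS D ≤ hammingNorm (fun x : Fin h × Fin m => a x.1 * v x.2) := dminS_le' hpmem hp0
      _ = hammingNorm a * hammingNorm v := hammingNorm_mul_prod' a v
      _ = dC i * dA i := by rw [hvn, han, mul_comm]
  refine le_antisymm part1 ?_
  have hSne : S.Nonempty := ⟨dC ⟨0, hs⟩ * dA ⟨0, hs⟩, ⟨0, hs⟩, rfl⟩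
  obtain ⟨i, hi⟩ := Nat.sInf_mem hSne
  rw [hi]
  exact keyUB i
end

section
/- Let q be a power of an odd prime p, fix an enumeration F_q = {α_1 = 0, α_2, …, α_q}, and for i = 1,…,q let w_i = (α_1^{i−1}, …, α_q^{i−1}) ∈ F_q^q (with 0^0 = 1). Define a_ℓ = w_ℓ for 1 ≤ ℓ ≤ q−1 and a_q = w_q + λ w_1, where λ is the image of (p−1)/2 in F_q (so 2λ + 1 = 0). Then for all 1 ≤ i, j ≤ q: ⟨a_i, a_j⟩_E = −1 if i + j = q + 1, and ⟨a_i, a_j⟩_E = 0 if i + j ≠ q + 1. -/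
lemma sumpow {F : Type*} [Field F] [Fintype F] (k : ℕ) :
    ∑ x : F, x ^ k = if k ≠ 0 ∧ (Fintype.card F - 1) ∣ k then -1 else 0 := by
  classical
  by_cases hk : k = 0
  · simp [hk, Finset.card_univ, FiniteField.cast_card_eq_zero]
  · let φ : Fˣ ↪ F := ⟨fun x ↦ x, fun _ _ h => Units.ext h⟩
    have hmap : Finset.univ.map φ = Finset.univ \ {0} := by
      ext x
      simp only [Finset.mem_map, Finset.mem_univ, Function.Embedding.coeFn_mk, true_and,
        Finset.mem_sdiff, Finset.mem_singleton, φ]; exact isUnit_iff_ne_zero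
    have h1 : ∑ x : Fˣ, (x : F) ^ k = ∑ x ∈ Finset.univ \ {0}, x ^ k := by
      rw [← hmap, Finset.sum_map]; rfl
    have h2 : ∑ x : F, x ^ k = ∑ x ∈ Finset.univ \ ({0} : Finset F), x ^ k := by
      rw [Finset.sum_sdiff_eq_sub (Finset.subset_univ _), Finset.sum_singleton,
        zero_pow hk, sub_zero]
    rw [h2, ← h1, FiniteField.sum_pow_units]
    simp [hk]

/-- Euclidean inner products of the vectors `a_1,…,a_q`
(`a_ℓ = w_ℓ` for `ℓ < q`, `a_q = w_q + ((p-1)/2)·w_1`). -/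
theorem stmt6 {F : Type*} [Field F] [Fintype F] {p n q : ℕ}
    (hp : p.Prime) (hodd : p ≠ 2) (hn : 0 < n) (hq : q = p ^ n)
    (hcard : Fintype.card F = q) (hqpos : 0 < q)
    (α : Fin q ≃ F) (h0 : α ⟨0, hqpos⟩ = 0)
    (i j : ℕ) (hi1 : 1 ≤ i) (hiq : i ≤ q) (hj1 : 1 ≤ j) (hjq : j ≤ q) :
    (i + j = q + 1 → ∑ t, av α p i t * av α p j t = -1) ∧
    (i + j ≠ q + 1 → ∑ t, av α p i t * av α p j t = 0) := by
  classical
  set lam : F := (((p - 1) / 2 : ℕ) : F) with hlamdef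
  have hp3 : 3 ≤ p := by have := hp.two_le; omega
  have hq3 : 3 ≤ q := by
    have : p ≤ p ^ n := Nat.le_self_pow hn.ne' p
    omega
  have hqF : (q : F) = 0 := by rw [← hcard]; exact FiniteField.cast_card_eq_zero F
  have hpF : (p : F) = 0 := by
    have h : (p : F) ^ n = 0 := by rw [← Nat.cast_pow, ← hq, hqF]
    exact pow_eq_zero_iff hn.ne' |>.mp h
  have hlam : (2 : F) * lam = -1 := by
    have hpodd : p % 2 = 1 := Nat.odd_iff.mp (hp.odd_of_ne_two hodd)
    have h1 : ((2 * ((p - 1) / 2) : ℕ) : F) = ((p - 1 : ℕ) : F) := by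
      congr 1; omega
    have h2 : ((p - 1 : ℕ) : F) = (p : F) - 1 := by
      rw [Nat.cast_sub hp.one_lt.le, Nat.cast_one]
    rw [hlamdef]
    push_cast at h1 ⊢
    rw [h1, h2, hpF]; ring
  -- inner products of w-vectors as power sums
  have hW : ∀ a b : ℕ, ∑ t, wv α a t * wv α b t = ∑ x : F, x ^ (a - 1 + (b - 1)) := by
    intro a b
    rw [← Equiv.sum_comp α (fun x => x ^ (a - 1 + (b - 1)))]
    simp [wv, pow_add]
  -- value of power sums
  have hS : ∀ k : ℕ, ∑ x : F, x ^ k = if k ≠ 0 ∧ (q - 1) ∣ k then -1 else 0 := by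
    intro k; rw [← hcard]; exact sumpow k
  have hV : ∀ k : ℕ, k ≤ 2 * q - 3 → ∑ x : F, x ^ k = if k = q - 1 then -1 else 0 := by
    intro k hk
    rw [hS k]
    by_cases hkq : k = q - 1
    · rw [if_pos hkq, if_pos ⟨by omega, by rw [hkq]⟩]
    · rw [if_neg hkq, if_neg]
      rintro ⟨hne, hdvd⟩
      exact hkq (Nat.eq_of_dvd_of_lt_two_mul hne hdvd (by omega))
  have hS2 : ∑ x : F, x ^ (2 * q - 2) = -1 := by
    rw [hS]
    rw [if_pos ⟨by omega, ⟨2, by omega⟩⟩]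
  by_cases hi : i = q <;> by_cases hj : j = q
  · -- i = j = q
    have hsum : ∑ t, av α p i t * av α p j t = -1 + lam * -1 + lam * -1 + lam * (lam * 0) := by
      have : ∀ t, av α p i t * av α p j t =
          wv α q t * wv α q t + lam * (wv α q t * wv α 1 t)
          + lam * (wv α 1 t * wv α q t) + lam * (lam * (wv α 1 t * wv α 1 t)) := by
        intro t
        simp only [av, if_pos hi, if_pos hj, Pi.add_apply, Pi.smul_apply, smul_eq_mul, hlamdef]
        ring
      rw [Finset.sum_congr rfl (fun t _ => this t)]
      rw [Finset.sum_add_distrib, Finset.sum_add_distrib, Finset.sum_add_distrib]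
      simp only [← Finset.mul_sum]
      rw [hW, hW, hW, hW]
      have e1 : q - 1 + (q - 1) = 2 * q - 2 := by omega
      have e2 : q - 1 + (1 - 1) = q - 1 := by omega
      have e3 : 1 - 1 + (q - 1) = q - 1 := by omega
      have e4 : (1 - 1 + (1 - 1) : ℕ) = 0 := by omega
      rw [e1, e2, e3, e4, hS2, hV (q - 1) (by omega), if_pos rfl, hS 0, if_neg (by simp)]
    constructor
    · intro h; omega
    · intro _
      rw [hsum]; linear_combination -hlam
  · -- i = q, j < q
    have hsum : ∑ t, av α p i t * av α p j t =
        (∑ x : F, x ^ (q - 1 + (j - 1))) + lam * ∑ x : F, x ^ (1 - 1 + (j - 1)) := by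
      have : ∀ t, av α p i t * av α p j t =
          wv α q t * wv α j t + lam * (wv α 1 t * wv α j t) := by
        intro t
        simp only [av, if_pos hi, if_neg hj, Pi.add_apply, Pi.smul_apply, smul_eq_mul, hlamdef]
        ring
      rw [Finset.sum_congr rfl (fun t _ => this t), Finset.sum_add_distrib,
        ← Finset.mul_sum, hW, hW]
    rw [hsum, hV _ (by omega), hV _ (by omega)]
    constructor
    · intro h
      rw [if_pos (by omega), if_neg (by omega)]; ring
    · intro h
      rw [if_neg (by omega), if_neg (by omega)]; ring
  · -- i < q, j = q
    have hsum : ∑ t, av α p i t * av α p j t =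
        (∑ x : F, x ^ (i - 1 + (q - 1))) + lam * ∑ x : F, x ^ (i - 1 + (1 - 1)) := by
      have : ∀ t, av α p i t * av α p j t =
          wv α i t * wv α q t + lam * (wv α i t * wv α 1 t) := by
        intro t
        simp only [av, if_pos hj, if_neg hi, Pi.add_apply, Pi.smul_apply, smul_eq_mul, hlamdef]
        ring
      rw [Finset.sum_congr rfl (fun t _ => this t), Finset.sum_add_distrib,
        ← Finset.mul_sum, hW, hW]
    rw [hsum, hV _ (by omega), hV _ (by omega)]
    constructor
    · intro h
      rw [if_pos (by omega), if_neg (by omega)]; ring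
    · intro h
      rw [if_neg (by omega), if_neg (by omega)]; ring
  · -- i < q, j < q
    have hsum : ∑ t, av α p i t * av α p j t = ∑ x : F, x ^ (i - 1 + (j - 1)) := by
      simp only [av, if_neg hi, if_neg hj]; exact hW i j
    rw [hsum, hV _ (by omega)]
    constructor
    · intro h; rw [if_pos (by omega)]
    · intro h; rw [if_neg (by omega)]
end

section
/- Let q be a power of an odd prime p, fix an enumeration F_q = {α_1 = 0, α_2, …, α_q}, set w_i = (α_1^{i−1}, …, α_q^{i−1}) ∈ F_q^q (0^0 = 1), a_ℓ = w_ℓ for 1 ≤ ℓ ≤ q−1, a_q = w_q + λ w_1 with λ = (p−1)/2 in F_q, and let Ȧ be the q×q matrix over F_q whose rows are a_1,…,a_q. Then Ȧ is non-singular by columns (NSC), and Ȧ Ȧ^t is the anti-diagonal matrix whose (i,j) entry equals −1 when i + j = q + 1 and 0 otherwise; in particular Ȧ Ȧ^t is a monomial matrix with respect to the permutation σ(j) = q − j + 1. -/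
lemma S_card_sub_one {F : Type*} [Field F] [Fintype F] :
    ∑ x : F, x ^ (Fintype.card F - 1) = -1 := by
  classical
  have h2 : 2 ≤ Fintype.card F := Fintype.one_lt_card
  have h : ∀ x : F, x ^ (Fintype.card F - 1) = 1 - (if x = 0 then 1 else 0) := by
    intro x
    by_cases hx : x = 0
    · simp [hx, zero_pow (show Fintype.card F - 1 ≠ 0 by omega)]
    · simp [hx, FiniteField.pow_card_sub_one_eq_one x hx]
  rw [Finset.sum_congr rfl fun x _ => h x, Finset.sum_sub_distrib,
    Finset.sum_ite_eq' Finset.univ (0 : F) (fun _ => (1 : F))]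
  simp [Finset.card_univ, FiniteField.cast_card_eq_zero]

lemma S_shift {F : Type*} [Field F] [Fintype F] (k : ℕ) (hk : Fintype.card F - 1 < k) :
    ∑ x : F, x ^ k = ∑ x : F, x ^ (k - (Fintype.card F - 1)) := by
  have h2 : 2 ≤ Fintype.card F := Fintype.one_lt_card
  refine Finset.sum_congr rfl fun x _ => ?_
  by_cases hx : x = 0
  · rw [hx, zero_pow (by omega), zero_pow (by omega)]
  · conv_lhs => rw [show k = (k - (Fintype.card F - 1)) + (Fintype.card F - 1) by omega]
    rw [pow_add, FiniteField.pow_card_sub_one_eq_one x hx, mul_one]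

lemma S_eval {F : Type*} [Field F] [Fintype F] (k : ℕ) (hk : k ≤ 2 * (Fintype.card F - 1)) :
    ∑ x : F, x ^ k =
      if k = Fintype.card F - 1 ∨ k = 2 * (Fintype.card F - 1) then -1 else 0 := by
  have h2 : 2 ≤ Fintype.card F := Fintype.one_lt_card
  rcases lt_trichotomy k (Fintype.card F - 1) with h | h | h
  · rw [FiniteField.sum_pow_lt_card_sub_one F k h, if_neg (by omega)]
  · rw [h, S_card_sub_one, if_pos (Or.inl rfl)]
  · rw [S_shift k h]
    rcases eq_or_lt_of_le hk with h2k | h2k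
    · rw [if_pos (Or.inr h2k),
        show k - (Fintype.card F - 1) = Fintype.card F - 1 by omega, S_card_sub_one]
    · rw [if_neg (by omega), FiniteField.sum_pow_lt_card_sub_one F _ (by omega)]

/-- the matrix `Ȧ` with rows `a_1,…,a_q` is NSC and `Ȧ Ȧᵀ` is the
anti-diagonal matrix with `-1` on the anti-diagonal; in particular `Ȧ Ȧᵀ` is monomial
with respect to the permutation `σ(j) = q - j + 1`. -/
theorem stmt7 {F : Type*} [Field F] [Fintype F] {p n q : ℕ}
    (hp : p.Prime) (hodd : p ≠ 2) (hn : 0 < n) (hq : q = p ^ n)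
    (hcard : Fintype.card F = q) (hqpos : 0 < q)
    (α : Fin q ≃ F) (h0 : α ⟨0, hqpos⟩ = 0) :
    IsNSC (Adot α p) ∧
    (∀ i j : Fin q, (Adot α p * (Adot α p).transpose) i j =
      if (i : ℕ) + (j : ℕ) + 1 = q then -1 else 0) ∧
    (∃ d : Fin q → F, (∀ i, d i ≠ 0) ∧
      ∀ i j : Fin q, (Adot α p * (Adot α p).transpose) i j =
        if Fin.rev j = i then d i else 0) := by
    classical
  have hp3 : 3 ≤ p := by
    have h2 := hp.two_le
    rcases (hp.odd_of_ne_two hodd) with ⟨m, hm⟩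
    omega
  have hq3 : 3 ≤ q := by
    rw [hq]
    calc 3 ≤ p := hp3
    _ = p ^ 1 := (pow_one p).symm
    _ ≤ p ^ n := Nat.pow_le_pow_right (by omega) hn
  have hqF : (q : F) = 0 := by rw [← hcard]; exact FiniteField.cast_card_eq_zero F
  have hpF : (p : F) = 0 := by
    have h : ((p : F)) ^ n = 0 := by rw [← Nat.cast_pow, ← hq]; exact hqF
    exact (pow_eq_zero_iff hn.ne').mp h
  set lam : F := (((p - 1) / 2 : ℕ) : F) with hlam
  have h2lam : 2 * lam = -1 := by
    have hdvd : 2 ∣ (p - 1) := by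
      rcases (hp.odd_of_ne_two hodd) with ⟨m, hm⟩
      omega
    have hev : 2 * ((p - 1) / 2) = p - 1 := Nat.mul_div_cancel' hdvd
    rw [hlam, ← Nat.cast_ofNat, ← Nat.cast_mul, hev, Nat.cast_sub hp.one_le, hpF]
    ring
  -- the rows of Adot
  have hrow : ∀ (i x : Fin q),
      Adot α p i x = α x ^ (i : ℕ) + (if (i : ℕ) + 1 = q then lam else 0) := by
    intro i x
    show av α p ((i : ℕ) + 1) x = _
    unfold av
    by_cases hi : (i : ℕ) + 1 = q
    · rw [if_pos hi, if_pos hi]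
      have hiv : q - 1 = (i : ℕ) := by omega
      simp [wv, hiv, hlam]
    · rw [if_neg hi, if_neg hi]
      simp [wv]
  -- instantiated power-sum evaluation
  have hSq : ∀ k : ℕ, k ≤ 2 * (q - 1) →
      ∑ y : F, y ^ k = if k = q - 1 ∨ k = 2 * (q - 1) then -1 else 0 := by
    intro k hk
    have := S_eval (F := F) k (by rw [hcard]; exact hk)
    rwa [hcard] at this
  -- the key product formula
  have key : ∀ i j : Fin q, (Adot α p * (Adot α p).transpose) i j =
      if (i : ℕ) + (j : ℕ) + 1 = q then -1 else 0 := by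
    intro i j
    have ha : (i : ℕ) < q := i.isLt
    have hb : (j : ℕ) < q := j.isLt
    set a := (i : ℕ) with hadef
    set b := (j : ℕ) with hbdef
    set s : F := if a + 1 = q then lam else 0 with hs
    set t : F := if b + 1 = q then lam else 0 with ht
    have expand : (Adot α p * (Adot α p).transpose) i j =
        (∑ y : F, y ^ (a + b)) + t * (∑ y : F, y ^ a) + s * (∑ y : F, y ^ b) := by
      rw [Matrix.mul_apply]
      simp only [Matrix.transpose_apply, hrow i, hrow j]
      rw [Equiv.sum_comp α (fun y => (y ^ a + s) * (y ^ b + t))]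
      have hterm : ∀ y : F, (y ^ a + s) * (y ^ b + t) =
          y ^ (a + b) + t * y ^ a + s * y ^ b + s * t := by
        intro y; rw [pow_add]; ring
      rw [Finset.sum_congr rfl fun y _ => hterm y]
      rw [Finset.sum_add_distrib, Finset.sum_add_distrib, Finset.sum_add_distrib,
        ← Finset.mul_sum, ← Finset.mul_sum, Finset.sum_const, Finset.card_univ, hcard]
      rw [nsmul_eq_mul, hqF]
      ring
    rw [expand]
    by_cases hia : a + 1 = q <;> by_cases hjb : b + 1 = q
    · -- both last
      rw [hs, ht, if_pos hia, if_pos hjb,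
        hSq (a + b) (by omega), hSq a (by omega), hSq b (by omega),
        if_pos (by omega : a = q - 1 ∨ a = 2 * (q - 1)),
        if_pos (by omega : b = q - 1 ∨ b = 2 * (q - 1)),
        if_pos (by omega : a + b = q - 1 ∨ a + b = 2 * (q - 1)),
        if_neg (by omega : ¬(a + b + 1 = q))]
      linear_combination -h2lam
    · rw [hs, ht, if_pos hia, if_neg hjb,
        hSq (a + b) (by omega), hSq b (by omega),
        if_neg (by omega : ¬(b = q - 1 ∨ b = 2 * (q - 1)))]
      by_cases hb0 : b = 0
      · rw [if_pos (by omega : a + b = q - 1 ∨ a + b = 2 * (q - 1)),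
          if_pos (by omega : a + b + 1 = q)]
        ring
      · rw [if_neg (by omega : ¬(a + b = q - 1 ∨ a + b = 2 * (q - 1))),
          if_neg (by omega : ¬(a + b + 1 = q))]
        ring
    · rw [hs, ht, if_neg hia, if_pos hjb,
        hSq (a + b) (by omega), hSq a (by omega),
        if_neg (by omega : ¬(a = q - 1 ∨ a = 2 * (q - 1)))]
      by_cases ha0 : a = 0
      · rw [if_pos (by omega : a + b = q - 1 ∨ a + b = 2 * (q - 1)),
          if_pos (by omega : a + b + 1 = q)]
        ring
      · rw [if_neg (by omega : ¬(a + b = q - 1 ∨ a + b = 2 * (q - 1))),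
          if_neg (by omega : ¬(a + b + 1 = q))]
        ring
    · rw [hs, ht, if_neg hia, if_neg hjb, hSq (a + b) (by omega)]
      by_cases hab : a + b + 1 = q
      · rw [if_pos (by omega : a + b = q - 1 ∨ a + b = 2 * (q - 1)), if_pos hab]
        ring
      · rw [if_neg (by omega : ¬(a + b = q - 1 ∨ a + b = 2 * (q - 1))), if_neg hab]
        ring
  refine ⟨?_, key, ?_⟩
  · -- NSC
    intro i hi hipos c hc
    have hinj : Function.Injective fun t : Fin i => α (c t) :=
      α.injective.comp hc.injective
    by_cases hiq : i = q
    · subst hiq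
      set v : Fin i → F := fun t => α (c t) with hv
      set V : Matrix (Fin i) (Fin i) F := (Matrix.vandermonde v).transpose with hV
      set L : Fin i := ⟨i - 1, by omega⟩ with hL
      set Z : Fin i := ⟨0, by omega⟩ with hZ
      have hM : (Matrix.of fun r t : Fin i => Adot α p (Fin.castLE hi r) (c t)) =
          V.updateRow L (V L + fun _ => lam) := by
        ext r u
        by_cases hr : r = L
        · subst hr
          rw [Matrix.of_apply, Matrix.updateRow_self]
          show av α p ((L : ℕ) + 1) (c u) = V L u + lam
          have hL1 : (L : ℕ) + 1 = i := by
            show i - 1 + 1 = i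
            omega
          unfold av
          rw [if_pos hL1]
          show wv α i (c u) + (((p - 1) / 2 : ℕ) : F) * wv α 1 (c u) = V L u + lam
          rw [← hlam]
          have hVLu : V L u = α (c u) ^ (i - 1) := rfl
          rw [hVLu]
          simp [wv]
        · rw [Matrix.of_apply, Matrix.updateRow_ne hr]
          show av α p ((r : ℕ) + 1) (c u) = _
          unfold av
          rw [if_neg (by
            intro hcon
            apply hr
            apply Fin.ext
            simp [hL]
            omega)]
          simp [wv, hV, hv, Matrix.vandermonde]
      rw [hM]
      have hw : (fun _ : Fin i => lam) = lam • V Z := by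
        funext u
        simp [hV, hZ, Matrix.vandermonde]
      rw [hw, Matrix.det_updateRow_add, Matrix.updateRow_eq_self,
        Matrix.det_updateRow_smul]
      have hZL : Z ≠ L := by
        intro hcon
        have := congrArg Fin.val hcon
        simp [hZ, hL] at this
        omega
      have hrep : (V.updateRow L (V Z)).det = 0 := by
        apply Matrix.det_zero_of_row_eq hZL
        rw [Matrix.updateRow_ne hZL, Matrix.updateRow_self]
      rw [hrep, mul_zero, add_zero, hV, Matrix.det_transpose]
      exact Matrix.det_vandermonde_ne_zero_iff.mpr hinj
    · have hilt : i < q := lt_of_le_of_ne hi hiq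
      have hM : (Matrix.of fun r t : Fin i => Adot α p (Fin.castLE hi r) (c t)) =
          (Matrix.vandermonde fun t => α (c t)).transpose := by
        ext r u
        rw [Matrix.of_apply]
        show av α p ((r : ℕ) + 1) (c u) = _
        unfold av
        rw [if_neg (by omega)]
        simp [wv, Matrix.vandermonde]
      rw [hM, Matrix.det_transpose]
      exact Matrix.det_vandermonde_ne_zero_iff.mpr hinj
  · -- monomial form
    refine ⟨fun _ => -1, fun _ => by simp, fun i j => ?_⟩
    rw [key i j]
    have hiff : ((i : ℕ) + (j : ℕ) + 1 = q) ↔ Fin.rev j = i := by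
      rw [Fin.ext_iff, Fin.val_rev]
      have := i.isLt
      have := j.isLt
      omega
    exact if_congr hiff rfl rfl
end

section
/- Let q be a power of an odd prime p. With the vectors a_1,…,a_{q²} ∈ F_{q²}^{q²} defined from the evaluations of monomials (a_ℓ = w_ℓ for ℓ < q², a_{q²} = w_{q²} + ((p−1)/2) w_1), let Ä be the q²×q² matrix whose rows are a_1,…,a_{q²}. Then −Ä Ä^† is a permutation matrix, where Ä^† is the conjugate transpose of Ä (entrywise q-th power followed by transpose). Equivalently: for each i ∈ {1,…,q²} there is exactly one j ∈ {1,…,q²} with ⟨a_i, a_j⟩_H = −1, all other Hermitian inner products ⟨a_i, a_{j'}⟩_H vanish, and the map i ↦ j is a bijection of {1,…,q²}. In particular, Ä Ä^† is a monomial matrix. -/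
open Finset in
lemma sumS {F : Type*} [Field F] [Fintype F] (k : ℕ) :
    (∑ x : F, x ^ k) = if k ≠ 0 ∧ (Fintype.card F - 1) ∣ k then -1 else 0 := by
  classical
  by_cases hk : k = 0
  · simp [hk, Finset.card_univ, FiniteField.cast_card_eq_zero]
  · let φ : Fˣ ↪ F := ⟨fun x ↦ x, Units.val_injective⟩
    have huniv : Finset.univ.map φ = Finset.univ \ {0} := by
      ext x
      simpa only [mem_map, mem_univ, Function.Embedding.coeFn_mk, true_and, mem_sdiff,
        mem_singleton, φ] using (show (∃ a : Fˣ, (a : F) = x) ↔ ¬x = 0 from isUnit_iff_ne_zero)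
    calc
      ∑ x : F, x ^ k = ∑ x ∈ univ \ {(0 : F)}, x ^ k := by
        rw [← Finset.sum_sdiff ({0} : Finset F).subset_univ, Finset.sum_singleton,
          zero_pow hk, add_zero]
      _ = ∑ x : Fˣ, (x : F) ^ k := by simp [φ, ← huniv, Finset.univ.sum_map φ]
      _ = _ := by rw [FiniteField.sum_pow_units F k]; simp [hk]

/-- `-Ä Ä†` is a permutation matrix, where `Ä` is the `q²×q²` matrix with
rows `a_1,…,a_{q²}` and `†` is entrywise `q`-th power followed by transpose; equivalently,
for each `i` there is exactly one `j` with `⟨a_i,a_j⟩_H = -1` and all other Hermitian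
inner products vanish, the map `i ↦ j` being a bijection. In particular `Ä Ä†` is a
monomial matrix. -/
theorem stmt9 {F : Type*} [Field F] [Fintype F] {p n q : ℕ}
    (hp : p.Prime) (hodd : p ≠ 2) (hn : 0 < n) (hq : q = p ^ n)
    (hcard : Fintype.card F = q ^ 2) (hpos : 0 < q ^ 2)
    (α : Fin (q ^ 2) ≃ F) (h0 : α ⟨0, hpos⟩ = 0) :
    (∃ σ : Equiv.Perm (Fin (q ^ 2)),
      ∀ i j : Fin (q ^ 2),
        -((Adot α p * ((Adot α p).map (fun x => x ^ q)).transpose) i j) =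
          if σ i = j then 1 else 0) ∧
    (∃ (d : Fin (q ^ 2) → F) (σ : Equiv.Perm (Fin (q ^ 2))), (∀ i, d i ≠ 0) ∧
      ∀ i j : Fin (q ^ 2),
        (Adot α p * ((Adot α p).map (fun x => x ^ q)).transpose) i j =
          if σ j = i then d i else 0) := by
  classical
  haveI := Fact.mk hp
  -- characteristic
  haveI hchar : CharP F p := by
    set r := ringChar F with hr
    haveI : CharP F r := ringChar.charP F
    have hrp : r.Prime := CharP.char_is_prime F r
    obtain ⟨k, _, hk⟩ := FiniteField.card F r
    have hcc : r ^ (k : ℕ) = p ^ (2 * n) := by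
      rw [← hk, hcard, hq, ← pow_mul, mul_comm]
    have : r = p := by
      have hdvd : r ∣ p ^ (2 * n) := hcc ▸ dvd_pow_self r k.pos.ne'
      exact (Nat.prime_dvd_prime_iff_eq hrp hp).mp (hrp.dvd_of_dvd_pow hdvd)
    rw [← this]; infer_instance
  set m : ℕ := q ^ 2 - 1 with hm
  set cc : F := (((p - 1) / 2 : ℕ) : F) with hcc
  have hp3 : 3 ≤ p := by have := hp.two_le; omega
  have hq3 : 3 ≤ q := le_trans hp3 (hq ▸ Nat.le_self_pow hn.ne' p)
  have hm8 : 8 ≤ m := by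
    have : 9 ≤ q ^ 2 := by nlinarith
    omega
  have hmN : m + 1 = q ^ 2 := by omega
  have hqq : q * q = m + 1 := by rw [hmN]; ring
  have hco : Nat.Coprime m q := by
    have h1 : Nat.Coprime m (q * q) := by
      rw [hqq, Nat.add_comm]; simp [Nat.coprime_add_self_right]
    exact Nat.Coprime.coprime_dvd_right (dvd_mul_left q q) h1
  -- number theory helpers
  have hdvdj : ∀ b : ℕ, b < m → (m ∣ b * q ↔ b = 0) := by
    intro b hb
    constructor
    · intro h
      exact Nat.eq_zero_of_dvd_of_lt (hco.dvd_of_dvd_mul_right h) hb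
    · rintro rfl; simp
  have hsym : ∀ a b : ℕ, m ∣ a + b * q → m ∣ b + a * q := by
    intro a b h
    have e : (b + a * q) * q = (a + b * q) + a * m := by
      rw [add_mul, mul_assoc, hqq]; ring
    have h2 : m ∣ (b + a * q) * q := by
      rw [e]; exact Nat.dvd_add h (Dvd.intro_left a rfl)
    exact hco.dvd_of_dvd_mul_right h2
  have hmodne : ∀ a : ℕ, 0 < a → a < m → (a * q) % m ≠ 0 := by
    intro a ha0 ham h
    have : m ∣ a * q := Nat.dvd_of_mod_eq_zero h
    have := (hdvdj a ham).mp this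
    omega
  have hdvd : ∀ a b : ℕ, 0 < a → a < m → b < m →
      (m ∣ a + b * q ↔ b = m - (a * q) % m) := by
    intro a b ha0 ham hbm
    have hstep1 : m ∣ a + b * q ↔ m ∣ (a * q) % m + b := by
      constructor
      · intro h
        have h2 : m ∣ b + a * q := hsym a b h
        have h3 : (a * q) % m + b ≡ b + a * q [MOD m] := by
          calc (a * q) % m + b ≡ a * q + b [MOD m] := (Nat.mod_modEq (a * q) m).add_right b
            _ = b + a * q := by ring
        exact (Nat.modEq_zero_iff_dvd.mp (h3.trans (Nat.modEq_zero_iff_dvd.mpr h2)))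
      · intro h
        have h3 : b + a * q ≡ (a * q) % m + b [MOD m] := by
          calc b + a * q = a * q + b := by ring
            _ ≡ (a * q) % m + b [MOD m] := ((Nat.mod_modEq (a * q) m).symm).add_right b
        have h2 : m ∣ b + a * q := Nat.modEq_zero_iff_dvd.mp (h3.trans (Nat.modEq_zero_iff_dvd.mpr h))
        exact hsym b a h2
    rw [hstep1]
    have ht0 : (a * q) % m ≠ 0 := hmodne a ha0 ham
    have htm : (a * q) % m < m := Nat.mod_lt _ (by omega)
    constructor
    · intro h
      have := Nat.eq_of_dvd_of_lt_two_mul (by omega) h (by omega)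
      omega
    · intro h
      have : (a * q) % m + b = m := by omega
      rw [this]
  -- field facts
  have hfrob : ∀ x y : F, (x + y) ^ q = x ^ q + y ^ q := by
    intro x y; rw [hq]; exact add_pow_char_pow x y p n
  have hq0 : q ≠ 0 := by omega
  have hccq : ∀ j : Fin (q ^ 2), (if (j : ℕ) = m then cc else 0) ^ q
      = (if (j : ℕ) = m then cc else 0) := by
    intro j; split_ifs with h
    · rw [hcc, hq, ← iterateFrobenius_def (R := F) p n, map_natCast]
    · exact zero_pow hq0
  have hcard0 : ((q ^ 2 : ℕ) : F) = 0 := by rw [← hcard]; exact FiniteField.cast_card_eq_zero F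
  have hcc2 : cc + cc = -1 := by
    obtain ⟨t, ht⟩ := hp.odd_of_ne_two hodd
    have h2 : (p - 1) / 2 + (p - 1) / 2 = p - 1 := by omega
    rw [hcc, ← Nat.cast_add, h2, Nat.cast_sub (show 1 ≤ p by omega), Nat.cast_one,
      CharP.cast_eq_zero F p, zero_sub]
  set S : ℕ → F := fun k => ∑ x : F, x ^ k with hSdef
  have hSval : ∀ k, S k = if k ≠ 0 ∧ m ∣ k then -1 else 0 := by
    intro k
    show (∑ x : F, x ^ k) = _
    rw [sumS (F := F) k, hcard, ← hm]
  -- rows of Adot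
  have hA : ∀ (i t : Fin (q ^ 2)), Adot α p i t
      = (α t) ^ (i : ℕ) + (if (i : ℕ) = m then cc else 0) := by
    intro i t
    have hilt := i.isLt
    show av α p ((i : ℕ) + 1) t = _
    by_cases hi : (i : ℕ) = m
    · simp only [av, if_pos (show (i : ℕ) + 1 = q ^ 2 by omega), Pi.add_apply, Pi.smul_apply,
        smul_eq_mul, wv, if_pos hi]
      rw [hi, hm]
      norm_num
      exact hcc.symm
    · simp only [av, if_neg (show ¬((i : ℕ) + 1 = q ^ 2) by omega), wv, if_neg hi,
        Nat.add_sub_cancel, add_zero]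
  -- the entries of the product
  have hMexp : ∀ i j : Fin (q ^ 2),
      (Adot α p * ((Adot α p).map (fun x => x ^ q)).transpose) i j
        = S ((i : ℕ) + (j : ℕ) * q) + (if (j : ℕ) = m then cc else 0) * S (i : ℕ)
          + (if (i : ℕ) = m then cc else 0) * S ((j : ℕ) * q) := by
    intro i j
    rw [Matrix.mul_apply]
    have h1 : ∀ t : Fin (q ^ 2),
        Adot α p i t * ((Adot α p).map fun x => x ^ q).transpose t j
          = (α t) ^ ((i : ℕ) + (j : ℕ) * q)
            + ((if (j : ℕ) = m then cc else 0) * (α t) ^ (i : ℕ)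
            + ((if (i : ℕ) = m then cc else 0) * (α t) ^ ((j : ℕ) * q)
            + (if (i : ℕ) = m then cc else 0) * (if (j : ℕ) = m then cc else 0))) := by
      intro t
      rw [Matrix.transpose_apply, Matrix.map_apply, hA i t, hA j t, hfrob, hccq,
        ← pow_mul, pow_add]
      ring
    rw [Finset.sum_congr rfl (fun t _ => h1 t)]
    rw [Finset.sum_add_distrib, Finset.sum_add_distrib, Finset.sum_add_distrib,
      ← Finset.mul_sum, ← Finset.mul_sum, Finset.sum_const,
      Equiv.sum_comp α (fun x => x ^ ((i : ℕ) + (j : ℕ) * q)),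
      Equiv.sum_comp α (fun x => x ^ (i : ℕ)),
      Equiv.sum_comp α (fun x => x ^ ((j : ℕ) * q))]
    rw [Finset.card_univ, Fintype.card_fin, nsmul_eq_mul, hcard0, zero_mul, add_zero]
    simp only [hSdef]
    ring
  -- the permutation
  have hmlt : m < q ^ 2 := by omega
  set σf : Fin (q ^ 2) → Fin (q ^ 2) := fun i =>
    if (i : ℕ) = m then ⟨0, hpos⟩ else ⟨m - ((i : ℕ) * q) % m, by omega⟩ with hσf
  have hσf1 : ∀ i : Fin (q ^ 2), (i : ℕ) = m → σf i = ⟨0, hpos⟩ := by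
    intro i hi; simp only [hσf, if_pos hi]
  have hσf2 : ∀ i : Fin (q ^ 2), (i : ℕ) ≠ m →
      σf i = ⟨m - ((i : ℕ) * q) % m, by omega⟩ := by
    intro i hi; simp only [hσf, if_neg hi]
  have hinv : Function.Involutive σf := by
    intro i
    have hilt := i.isLt
    by_cases hi : (i : ℕ) = m
    · rw [hσf1 i hi, hσf2 ⟨0, hpos⟩ (by simp; omega)]
      exact Fin.ext (by simp; omega)
    · by_cases hi0 : (i : ℕ) = 0
      · rw [hσf2 i hi, hσf1 _ (by simp [hi0]), Fin.ext_iff]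
        simp [hi0]
      · have hlt : (i : ℕ) < m := by omega
        have ht0 := hmodne (i : ℕ) (by omega) hlt
        have htm : ((i : ℕ) * q) % m < m := Nat.mod_lt _ (by omega)
        rw [hσf2 i hi, hσf2 _ (by simp; omega)]
        have hd1 : m ∣ (i : ℕ) + (m - ((i : ℕ) * q) % m) * q :=
          (hdvd (i : ℕ) (m - ((i : ℕ) * q) % m) (by omega) hlt (by omega)).mpr rfl
        have hd2 : m ∣ (m - ((i : ℕ) * q) % m) + (i : ℕ) * q := hsym _ _ hd1
        have hres := (hdvd (m - ((i : ℕ) * q) % m) (i : ℕ) (by omega) (by omega) hlt).mp hd2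
        exact Fin.ext (by simpa using hres.symm)
  -- entry formula
  have hM : ∀ i j : Fin (q ^ 2),
      (Adot α p * ((Adot α p).map (fun x => x ^ q)).transpose) i j
        = if σf i = j then (-1 : F) else 0 := by
    intro i j
    have hilt : (i : ℕ) < q ^ 2 := i.isLt
    have hjlt : (j : ℕ) < q ^ 2 := j.isLt
    rw [hMexp i j, hSval, hSval, hSval]
    by_cases hi : (i : ℕ) = m
    · by_cases hj : (j : ℕ) = m
      · have hσ : σf i ≠ j := by
          rw [hσf1 i hi]; intro h
          have := congrArg Fin.val h
          simp at this; omega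
        rw [hi, hj, if_neg hσ, if_pos ⟨by omega, ⟨1 + q, by ring⟩⟩,
          if_pos (show m = m from rfl), if_pos ⟨by omega, dvd_rfl⟩,
          if_pos ⟨Nat.mul_ne_zero (by omega) (by omega), dvd_mul_right m q⟩]
        linear_combination (-1 : F) * hcc2
      · have hjm : (j : ℕ) < m := by omega
        by_cases hj0 : (j : ℕ) = 0
        · have hσ : σf i = j := by
            rw [hσf1 i hi]; exact Fin.ext (by simp [hj0])
          rw [hi, hj0, if_pos hσ, if_pos ⟨show m + 0 * q ≠ 0 by omega, by simp⟩,
            if_neg (show ¬(0 = m) by omega), if_pos (show m = m from rfl),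
            if_neg (show ¬((0 * q : ℕ) ≠ 0 ∧ m ∣ 0 * q) by simp)]
          ring
        · have hσ : σf i ≠ j := by
            rw [hσf1 i hi]; intro h
            have := congrArg Fin.val h
            simp at this; omega
          have hc1 : ¬(m + (j : ℕ) * q ≠ 0 ∧ m ∣ m + (j : ℕ) * q) := by
            rintro ⟨-, hdv⟩
            have h2 : m ∣ (j : ℕ) * q := by
              have := Nat.dvd_sub hdv (dvd_refl m)
              simpa [Nat.add_sub_cancel_left] using this
            have := (hdvdj (j : ℕ) hjm).mp h2
            omega
          have hc3 : ¬(((j : ℕ) * q : ℕ) ≠ 0 ∧ m ∣ (j : ℕ) * q) := by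
            rintro ⟨-, hdv⟩
            exact hj0 ((hdvdj (j : ℕ) hjm).mp hdv)
          rw [hi, if_neg hσ, if_neg hc1, if_neg hj, if_pos (show m = m from rfl), if_neg hc3]
          ring
    · have him : (i : ℕ) < m := by omega
      by_cases hj : (j : ℕ) = m
      · by_cases hi0 : (i : ℕ) = 0
        · have hσ : σf i = j := by
            rw [hσf2 i hi]
            exact Fin.ext (by simp [hi0]; omega)
          rw [hj, hi0, if_pos hσ,
            if_pos ⟨show (0 : ℕ) + m * q ≠ 0 by have := Nat.mul_ne_zero (show m ≠ 0 by omega) hq0; omega,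
              ⟨q, by ring⟩⟩,
            if_pos (show m = m from rfl),
            if_neg (show ¬((0 : ℕ) ≠ 0 ∧ m ∣ 0) by simp), if_neg (show ¬((0:ℕ) = m) by omega)]
          ring
        · have hσ : σf i ≠ j := by
            rw [hσf2 i hi]; intro h
            have := congrArg Fin.val h
            have ht0 := hmodne (i : ℕ) (by omega) him
            have htm : ((i : ℕ) * q) % m < m := Nat.mod_lt _ (by omega)
            simp at this; omega
          have hc1 : ¬((i : ℕ) + m * q ≠ 0 ∧ m ∣ (i : ℕ) + m * q) := by
            rintro ⟨-, hdv⟩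
            have h2 : m ∣ (i : ℕ) := by
              have := Nat.dvd_sub hdv (dvd_mul_right m q)
              simpa [Nat.add_sub_cancel] using this
            have := Nat.eq_zero_of_dvd_of_lt h2 him
            omega
          have hc2 : ¬((i : ℕ) ≠ 0 ∧ m ∣ (i : ℕ)) := by
            rintro ⟨h1, h2⟩
            exact h1 (Nat.eq_zero_of_dvd_of_lt h2 him)
          rw [hj, if_neg hσ, if_neg hc1, if_pos (show m = m from rfl), if_neg hc2, if_neg hi]
          ring
      · have hjm : (j : ℕ) < m := by omega
        by_cases hi0 : (i : ℕ) = 0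
        · have hσ : σf i ≠ j := by
            rw [hσf2 i hi]; intro h
            have := congrArg Fin.val h
            simp [hi0] at this; omega
          have hc1 : ¬((i : ℕ) + (j : ℕ) * q ≠ 0 ∧ m ∣ (i : ℕ) + (j : ℕ) * q) := by
            rintro ⟨h1, h2⟩
            rw [hi0] at h1 h2
            simp at h2 h1
            have := (hdvdj (j : ℕ) hjm).mp h2
            simp [this] at h1
          rw [if_neg hσ, if_neg hc1, if_neg hj, if_neg hi]
          ring
        · have ht0 := hmodne (i : ℕ) (by omega) him
          have htm : ((i : ℕ) * q) % m < m := Nat.mod_lt _ (by omega)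
          by_cases hb : (j : ℕ) = m - ((i : ℕ) * q) % m
          · have hσ : σf i = j := by
              rw [hσf2 i hi]; exact Fin.ext (by simp [hb])
            rw [if_pos hσ, if_pos ⟨by omega, (hdvd (i : ℕ) (j : ℕ) (by omega) him hjm).mpr hb⟩,
              if_neg hj, if_neg hi]
            ring
          · have hσ : σf i ≠ j := by
              rw [hσf2 i hi]; intro h
              have := congrArg Fin.val h
              simp at this; omega
            have hc1 : ¬((i : ℕ) + (j : ℕ) * q ≠ 0 ∧ m ∣ (i : ℕ) + (j : ℕ) * q) := by
              rintro ⟨-, h2⟩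
              exact hb ((hdvd (i : ℕ) (j : ℕ) (by omega) him hjm).mp h2)
            rw [if_neg hσ, if_neg hc1, if_neg hj, if_neg hi]
            ring
  -- assembly
  constructor
  · refine ⟨Function.Involutive.toPerm σf hinv, fun i j => ?_⟩
    have hcoe : (Function.Involutive.toPerm σf hinv) i = σf i := rfl
    rw [hM i j, hcoe]
    split_ifs <;> ring
  · refine ⟨fun _ => -1, Function.Involutive.toPerm σf hinv, fun i => by norm_num, fun i j => ?_⟩
    have hcoe : (Function.Involutive.toPerm σf hinv) j = σf j := rfl
    rw [hM i j, hcoe]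
    by_cases h : σf i = j
    · rw [if_pos h, if_pos (show σf j = i by rw [← h]; exact hinv i)]
    · rw [if_neg h, if_neg (show ¬(σf j = i) from fun hh => h (by rw [← hh]; exact hinv j))]
end

section
/- Let q be a power of an odd prime p and let Ȧ be the q×q matrix over F_q whose rows are a_1 = w_1, …, a_{q−1} = w_{q−1}, a_q = w_q + ((p−1)/2) w_1, where w_i is the evaluation of X^{i−1} at all points of F_q. For i = 1,…,q, let C_i ⊆ F_q^m be a nonzero linear code of dimension k_i and minimum distance d_i such that C_{q−i+1}^{⊥E} ⊆ C_i for all i. Then the matrix-product code C = [C_1,…,C_q]·Ȧ is a Euclidean dual-containing linear code of length qm and dimension Σ_{i=1}^q k_i, with minimum distance d(C) ≥ min_{1 ≤ i ≤ q} d_i (q − i + 1). -/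
open Finset in
lemma sum_pow_dvd {F : Type*} [Field F] [Fintype F] {q k : ℕ}
    (hcard : Fintype.card F = q) (hq1 : 1 < q) (hk : k ≠ 0) (hdvd : (q - 1) ∣ k) :
    ∑ x : F, x ^ k = -1 := by
  classical
  have h1 : ∀ x : F, x ^ k = if x = 0 then 0 else 1 := by
    intro x
    by_cases hx : x = 0
    · simp [hx, zero_pow hk]
    · obtain ⟨c, rfl⟩ := hdvd
      rw [pow_mul, if_neg hx]
      rw [← hcard, FiniteField.pow_card_sub_one_eq_one x hx, one_pow]
  rw [Finset.sum_congr rfl (fun x _ => h1 x)]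
  have h2 : ∀ x : F, (if x = 0 then (0:F) else 1) = 1 - (if x = 0 then 1 else 0) := by
    intro x; split <;> simp
  rw [Finset.sum_congr rfl (fun x _ => h2 x), Finset.sum_sub_distrib,
    Finset.sum_ite_eq' Finset.univ (0:F) (fun _ => (1:F))]
  simp [Finset.card_univ, hcard ▸ FiniteField.cast_card_eq_zero F]

open Finset in
lemma sum_pow_ndvd {F : Type*} [Field F] [Fintype F] {q k : ℕ}
    (hcard : Fintype.card F = q) (hklt : k < 2 * (q - 1)) (hdvd : ¬ (q - 1) ∣ k) :
    ∑ x : F, x ^ k = 0 := by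
  classical
  by_cases hlt : k < q - 1
  · subst hcard; exact FiniteField.sum_pow_lt_card_sub_one (K := F) k hlt
  · push_neg at hlt
    have hk0 : k ≠ 0 := by rintro rfl; exact hdvd (dvd_zero _)
    have hne : k ≠ q - 1 := by rintro rfl; exact hdvd dvd_rfl
    have hgt : q - 1 < k := lt_of_le_of_ne hlt (Ne.symm hne)
    set r := k - (q - 1) with hr
    have hrpos : 0 < r := Nat.sub_pos_of_lt hgt
    have hrlt : r < q - 1 := by omega
    have h1 : ∀ x : F, x ^ k = x ^ r := by
      intro x
      by_cases hx : x = 0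
      · simp [hx, zero_pow hk0, zero_pow hrpos.ne']
      · have : k = (q - 1) + r := by omega
        rw [this, pow_add, ← hcard, FiniteField.pow_card_sub_one_eq_one x hx, one_mul]
    rw [Finset.sum_congr rfl (fun x _ => h1 x)]
    subst hcard; exact FiniteField.sum_pow_lt_card_sub_one (K := F) r hrlt

open scoped Matrix

lemma Adot_apply {F : Type*} [Field F] {q : ℕ} (α : Fin q ≃ F) (p : ℕ) (r j : Fin q) :
    Adot α p r j = if (r : ℕ) = q - 1 then α j ^ (q - 1) + (((p - 1) / 2 : ℕ) : F)
      else α j ^ (r : ℕ) := by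
  have hr := r.2
  by_cases h : (r : ℕ) = q - 1
  · have : (r : ℕ) + 1 = q := by omega
    have h2 : q - 1 + 1 = q := by omega
    simp [Adot, av, wv, this, h, h2]
  · have : (r : ℕ) + 1 ≠ q := by omega
    simp [Adot, av, wv, this, h]

section Gram
variable {F : Type*} [Field F] [Fintype F] {q : ℕ} (hcard : Fintype.card F = q) (hq1 : 1 < q)

include hcard hq1 in
lemma sum_pow_dvd' {k : ℕ} (hk : k ≠ 0) (hdvd : (q - 1) ∣ k) : ∑ x : F, x ^ k = -1 :=
  sum_pow_dvd hcard hq1 hk hdvd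

include hcard in
lemma sum_pow_ndvd' {k : ℕ} (hklt : k < 2 * (q - 1)) (hdvd : ¬ (q - 1) ∣ k) :
    ∑ x : F, x ^ k = 0 :=
  sum_pow_ndvd hcard hklt hdvd

include hcard hq1 in
lemma hs_lemma (a b : ℕ) (ha : a < q - 1) (hb : b < q - 1) :
    ∑ x : F, x ^ a * x ^ b = if a + b = q - 1 then -1 else 0 := by
  simp only [← pow_add]
  by_cases h : a + b = q - 1
  · rw [if_pos h, sum_pow_dvd' hcard hq1 (by omega) (h ▸ dvd_rfl)]
  · rw [if_neg h]
    by_cases h0 : a + b = 0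
    · rw [h0]
      simp only [pow_zero, Finset.sum_const, Finset.card_univ, hcard, nsmul_eq_mul, mul_one]
      exact hcard ▸ FiniteField.cast_card_eq_zero F
    · refine sum_pow_ndvd' hcard (by omega) ?_
      rintro ⟨c, hc⟩
      rcases c with _ | _ | c
      · omega
      · omega
      · have h2 : (q - 1) * (c + 1 + 1) = (q-1)*c + 2*(q-1) := by ring
        omega

include hcard hq1 in
lemma hmixed_lemma (a : ℕ) (ha : a < q - 1) (c : F) :
    ∑ x : F, x ^ a * (x ^ (q - 1) + c) = if a = 0 then -1 else 0 := by
  have h1 : ∀ x : F, x ^ a * (x ^ (q - 1) + c) = x ^ (a + (q - 1)) + c * x ^ a := by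
    intro x; rw [pow_add]; ring
  have h2 : ∑ x : F, x ^ a = 0 := by
    have := FiniteField.sum_pow_lt_card_sub_one (K := F) a (by rw [hcard]; exact ha)
    exact this
  rw [Finset.sum_congr rfl fun x _ => h1 x, Finset.sum_add_distrib, ← Finset.mul_sum,
    h2, mul_zero, add_zero]
  by_cases h : a = 0
  · subst h; rw [zero_add, sum_pow_dvd' hcard hq1 (by omega) dvd_rfl, if_pos rfl]
  · rw [if_neg h]
    refine sum_pow_ndvd' hcard (by omega) ?_
    rintro ⟨c, hc⟩
    rcases c with _ | _ | c
    · omega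
    · omega
    · have h2 : (q - 1) * (c + 1 + 1) = (q-1)*c + 2*(q-1) := by ring
      omega

include hcard hq1 in
lemma hlast2_lemma (c : F) (hc2 : 2 * c = -1) :
    ∑ x : F, (x ^ (q - 1) + c) * (x ^ (q - 1) + c) = 0 := by
  have hqF : (q : F) = 0 := by rw [← hcard]; exact FiniteField.cast_card_eq_zero F
  have h1 : ∀ x : F, (x ^ (q-1) + c) * (x ^ (q-1) + c)
      = x ^ ((q-1) + (q-1)) + (2*c) * x ^ (q-1) + c * c := by
    intro x; rw [pow_add]; ring
  rw [Finset.sum_congr rfl fun x _ => h1 x, Finset.sum_add_distrib, Finset.sum_add_distrib,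
    ← Finset.mul_sum, sum_pow_dvd' hcard hq1 (by omega) ⟨2, by ring⟩,
    sum_pow_dvd' hcard hq1 (by omega) dvd_rfl, hc2, Finset.sum_const, Finset.card_univ, hcard,
    nsmul_eq_mul, hqF]
  ring

include hcard hq1 in
lemma gram_lemma (α : Fin q ≃ F) {p : ℕ} (hc2 : 2 * (((p - 1) / 2 : ℕ) : F) = -1)
    (r r' : Fin q) :
    ∑ j, Adot α p r j * Adot α p r' j = if r' = Fin.rev r then -1 else 0 := by
  set c : F := (((p - 1) / 2 : ℕ) : F) with hc
  have hrev : ∀ s s' : Fin q, s' = Fin.rev s ↔ (s:ℕ) + (s':ℕ) = q - 1 := by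
    intro s s'
    rw [Fin.ext_iff, Fin.val_rev]
    have := s.2; have := s'.2
    omega
  simp only [Adot_apply]
  by_cases h : (r : ℕ) = q - 1 <;> by_cases h' : (r' : ℕ) = q - 1 <;>
    simp only [h, h', if_true, if_false, if_neg, if_pos]
  · rw [Equiv.sum_comp α (fun x => (x ^ (q-1) + c) * (x ^ (q-1) + c)),
      hlast2_lemma hcard hq1 c hc2, if_neg]
    rw [hrev]; omega
  · rw [Finset.sum_congr rfl (fun j _ => mul_comm _ _),
      Equiv.sum_comp α (fun x => x ^ (r':ℕ) * (x ^ (q-1) + c)),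
      hmixed_lemma hcard hq1 (r':ℕ) (by have := r'.2; omega) c]
    have : r' = Fin.rev r ↔ (r':ℕ) = 0 := by rw [hrev]; omega
    exact if_congr this.symm rfl rfl
  · rw [Equiv.sum_comp α (fun x => x ^ (r:ℕ) * (x ^ (q-1) + c)),
      hmixed_lemma hcard hq1 (r:ℕ) (by have := r.2; omega) c]
    have : r' = Fin.rev r ↔ (r:ℕ) = 0 := by rw [hrev]; omega
    exact if_congr this.symm rfl rfl
  · rw [Equiv.sum_comp α (fun x => x ^ (r:ℕ) * x ^ (r':ℕ)),
      hs_lemma hcard hq1 (r:ℕ) (r':ℕ) (by have := r.2; omega) (by have := r'.2; omega)]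
    exact if_congr (hrev r r').symm rfl rfl

end Gram

lemma Adot_det_ne_zero {F : Type*} [Field F] {q : ℕ} (hq1 : 1 < q) (α : Fin q ≃ F) (p : ℕ) :
    (Adot α p).det ≠ 0 := by
  have hq0 : 0 < q := by omega
  set c : F := (((p - 1) / 2 : ℕ) : F) with hcdef
  set M : Matrix (Fin q) (Fin q) F := Matrix.of fun r j : Fin q => α j ^ (r : ℕ) with hM
  have hMdet : M.det ≠ 0 := by
    have hMT : M = (Matrix.vandermonde fun i => α i)ᵀ := by
      ext r j; simp [hM, Matrix.vandermonde]
    rw [hMT, Matrix.det_transpose, Matrix.det_vandermonde]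
    refine Finset.prod_ne_zero_iff.mpr fun i _ => Finset.prod_ne_zero_iff.mpr fun j hj => ?_
    rw [Finset.mem_Ioi] at hj
    exact sub_ne_zero_of_ne fun hEq => absurd (α.injective hEq) (fun h => by
      subst h; exact absurd hj (lt_irrefl _))
  set lastI : Fin q := ⟨q - 1, by omega⟩ with hlast
  set zeroI : Fin q := ⟨0, hq0⟩ with hzero
  have hA : Adot α p = M.updateRow lastI (M lastI + c • M zeroI) := by
    ext r j
    rw [Matrix.updateRow_apply, Adot_apply]
    by_cases h : r = lastI
    · rw [if_pos h, if_pos (by simp [h, hlast])]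
      simp [hM, hzero, hlast, hcdef]
    · have hv : (r : ℕ) ≠ q - 1 := by
        intro hv; exact h (Fin.ext (by simp [hlast, hv]))
      rw [if_neg h, if_neg hv]
      simp [hM]
  rw [hA, Matrix.det_updateRow_add_smul_self M
    (show lastI ≠ zeroI by simp only [hlast, hzero, ne_eq, Fin.mk.injEq]; omega) c]
  exact hMdet

lemma key_lemma {F : Type*} [Field F] [Fintype F] {q : ℕ} (hcard : Fintype.card F = q)
    (hq1 : 1 < q) (α : Fin q ≃ F) {p : ℕ} (hc2 : 2 * (((p - 1) / 2 : ℕ) : F) = -1)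
    (j j' : Fin q) :
    ∑ i, Adot α p i j * Adot α p (Fin.rev i) j' = if j = j' then -1 else 0 := by
  classical
  set A := Adot α p with hA
  set P : Matrix (Fin q) (Fin q) F := Matrix.of (fun i k => if k = Fin.rev i then 1 else 0)
    with hP
  have hG : A * Aᵀ = -P := by
    ext r r'
    rw [Matrix.mul_apply]
    simp only [Matrix.transpose_apply, Matrix.neg_apply, hP, Matrix.of_apply]
    rw [gram_lemma hcard hq1 α hc2 r r']
    split_ifs <;> simp
  have hPA : ∀ (N : Matrix (Fin q) (Fin q) F) i k, (P * N) i k = N (Fin.rev i) k := by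
    intro N i k
    rw [Matrix.mul_apply]
    simp only [hP, Matrix.of_apply, ite_mul, one_mul, zero_mul]
    rw [Finset.sum_ite_eq' Finset.univ (Fin.rev i) (fun b => N b k),
      if_pos (Finset.mem_univ _)]
  have hP2 : P * P = 1 := by
    ext i k
    rw [hPA, Matrix.one_apply]
    simp only [hP, Matrix.of_apply, Fin.rev_rev]
    exact if_congr eq_comm rfl rfl
  haveI : Invertible A := A.invertibleOfIsUnitDet
    (isUnit_iff_ne_zero.mpr (Adot_det_ne_zero hq1 α p))
  have hmain : Aᵀ * (P * A) = -1 := by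
    have h1 : A * (Aᵀ * (P * A)) = A * (-1) := by
      calc A * (Aᵀ * (P * A)) = A * Aᵀ * P * A := by rw [Matrix.mul_assoc, Matrix.mul_assoc]
        _ = -P * P * A := by rw [hG]
        _ = -(P * P) * A := by rw [neg_mul]
        _ = A * (-1) := by rw [hP2]; simp
    calc Aᵀ * (P * A) = ⅟A * (A * (Aᵀ * (P * A))) := (invOf_mul_cancel_left _ _).symm
      _ = ⅟A * (A * (-1)) := by rw [h1]
      _ = -1 := invOf_mul_cancel_left _ _
  have he := congrFun (congrFun hmain j) j'
  rw [Matrix.mul_apply] at he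
  simp only [Matrix.transpose_apply, hPA] at he
  rw [he]
  simp only [Matrix.neg_apply, Matrix.one_apply]
  split_ifs <;> simp

section Mpc
variable {F : Type*} [Field F] {s h m : ℕ}

/-- The linear map underlying matrix-product codes. -/
def mpcMap (A : Matrix (Fin s) (Fin h) F) : (Fin s → Fin m → F) →ₗ[F] (Fin h × Fin m → F) where
  toFun v := fun x => ∑ i, A i x.1 * v i x.2
  map_add' u v := by
    funext x
    simp only [Pi.add_apply, mul_add, Finset.sum_add_distrib]
  map_smul' c v := by
    funext x
    simp only [Pi.smul_apply, RingHom.id_apply, smul_eq_mul, Finset.mul_sum]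
    exact Finset.sum_congr rfl fun i _ => by ring

lemma mpcSet_eq_map (C : Fin s → Submodule F (Fin m → F)) (A : Matrix (Fin s) (Fin h) F) :
    ((Submodule.map (mpcMap (m := m) A) (Submodule.pi Set.univ C) : Submodule F _) :
      Set (Fin h × Fin m → F)) = mpcSet (fun i => (C i : Set (Fin m → F))) A := by
  ext x
  simp only [SetLike.mem_coe, Submodule.mem_map, Submodule.mem_pi, Set.mem_univ,
    forall_true_left, mpcSet, Set.mem_setOf_eq]
  constructor
  · rintro ⟨v, hv, rfl⟩
    exact ⟨v, fun i => hv i, fun y => rfl⟩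
  · rintro ⟨v, hv, hx⟩
    exact ⟨v, fun i => hv i, by funext y; exact (hx y).symm⟩

end Mpc

section Inj
variable {F : Type*} [Field F] {s m : ℕ}

lemma vecMul_inj {A : Matrix (Fin s) (Fin s) F} (hdet : A.det ≠ 0) {u v : Fin s → F}
    (h : ∀ j, ∑ i, A i j * u i = ∑ i, A i j * v i) : u = v := by
  have hinj : Function.Injective A.vecMul :=
    Matrix.vecMul_injective_iff_isUnit.mpr
      ((Matrix.isUnit_iff_isUnit_det A).mpr (isUnit_iff_ne_zero.mpr hdet))
  apply hinj
  funext j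
  simp only [Matrix.vecMul, dotProduct]
  calc ∑ i, u i * A i j = ∑ i, A i j * u i := Finset.sum_congr rfl fun i _ => mul_comm _ _
    _ = ∑ i, A i j * v i := h j
    _ = ∑ i, v i * A i j := Finset.sum_congr rfl fun i _ => mul_comm _ _

lemma mpcMap_injective {A : Matrix (Fin s) (Fin s) F} (hdet : A.det ≠ 0) :
    Function.Injective (mpcMap (m := m) A) := by
  intro u v h
  funext i t
  have h2 : ∀ j, ∑ i', A i' j * u i' t = ∑ i', A i' j * v i' t := by
    intro j
    exact congrFun h (j, t)
  exact congrFun (vecMul_inj hdet h2) i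

/-- Equivalence between a pi submodule and the product of the submodules. -/
def subPiEquiv (C : Fin s → Submodule F (Fin m → F)) :
    (Submodule.pi Set.univ C) ≃ₗ[F] Π i, C i where
  toFun x i := ⟨x.1 i, x.2 i trivial⟩
  map_add' x y := rfl
  map_smul' c x := rfl
  invFun y := ⟨fun i => (y i).1, fun i _ => (y i).2⟩
  left_inv x := rfl
  right_inv y := rfl

lemma finrank_mpc {A : Matrix (Fin s) (Fin s) F} (hdet : A.det ≠ 0)
    (C : Fin s → Submodule F (Fin m → F)) :
    Module.finrank F (Submodule.map (mpcMap (m := m) A) (Submodule.pi Set.univ C)) =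
      ∑ i, Module.finrank F (C i) := by
  rw [← LinearEquiv.finrank_eq
    (Submodule.equivMapOfInjective _ (mpcMap_injective hdet) (Submodule.pi Set.univ C))]
  rw [LinearEquiv.finrank_eq (subPiEquiv C)]
  exact Module.finrank_pi_fintype F

end Inj

section Dual
variable {F : Type*} [Field F] {q m : ℕ}

lemma dual_containing (A : Matrix (Fin q) (Fin q) F)
    (hkey : ∀ j j', ∑ i, A i j * A (Fin.rev i) j' = if j = j' then -1 else 0)
    (C : Fin q → Submodule F (Fin m → F))
    (hdual : ∀ i : Fin q, dualE ((C (Fin.rev i) : Set (Fin m → F))) ⊆ (C i : Set (Fin m → F))) :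
    dualE ((Submodule.map (mpcMap (m := m) A) (Submodule.pi Set.univ C) : Submodule F _) :
        Set (Fin q × Fin m → F)) ⊆
      ((Submodule.map (mpcMap (m := m) A) (Submodule.pi Set.univ C) : Submodule F _) :
        Set (Fin q × Fin m → F)) := by
  classical
  intro x hx
  set y : Fin q → Fin m → F := fun i t => ∑ j, A i j * x (j, t) with hy
  have hyC : ∀ i, y i ∈ dualE ((C i : Set (Fin m → F))) := by
    intro i w hw
    have hmem : (mpcMap (m := m) A) (Pi.single i w) ∈
        Submodule.map (mpcMap (m := m) A) (Submodule.pi Set.univ C) := by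
      refine Submodule.mem_map_of_mem (fun i' _ => ?_)
      by_cases h : i' = i
      · subst h; rw [Pi.single_eq_same]; exact hw
      · rw [Pi.single_eq_of_ne h]; exact (C i').zero_mem
    have hsingle : ∀ (j : Fin q) (t : Fin m),
        (mpcMap (m := m) A) (Pi.single i w) (j, t) = A i j * w t := by
      intro j t
      show ∑ i', A i' j * (Pi.single i w : Fin q → Fin m → F) i' t = _
      rw [Finset.sum_eq_single i]
      · rw [Pi.single_eq_same]
      · intro b _ hb; rw [Pi.single_eq_of_ne hb]; simp
      · intro hmem'; exact absurd (Finset.mem_univ i) hmem'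
    have h0 := hx _ hmem
    rw [Fintype.sum_prod_type] at h0
    calc ∑ t, y i t * w t = ∑ t, ∑ j, (A i j * x (j, t)) * w t := by
          exact Finset.sum_congr rfl fun t _ => Finset.sum_mul _ _ _
      _ = ∑ j, ∑ t, x (j, t) * (A i j * w t) := by
          rw [Finset.sum_comm]
          exact Finset.sum_congr rfl fun j _ => Finset.sum_congr rfl fun t _ => by ring
      _ = 0 := by
          rw [← h0]
          exact Finset.sum_congr rfl fun j _ => Finset.sum_congr rfl fun t _ => by
            rw [hsingle j t]
  set u : Fin q → Fin m → F := fun i => -(y (Fin.rev i)) with hu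
  have huC : ∀ i, u i ∈ C i := fun i => (C i).neg_mem (hdual i (hyC (Fin.rev i)))
  have hxu : (mpcMap (m := m) A) u = x := by
    funext z
    obtain ⟨j, t⟩ := z
    show ∑ i, A i j * u i t = x (j, t)
    have h1 : ∑ i, A i j * u i t = -∑ i, A i j * y (Fin.rev i) t := by
      rw [← Finset.sum_neg_distrib]
      exact Finset.sum_congr rfl fun i _ => by simp [hu]
    rw [h1]
    have h2 : ∑ i, A i j * y (Fin.rev i) t = -x (j, t) := by
      calc ∑ i, A i j * y (Fin.rev i) t
          = ∑ i, ∑ j', (A i j * A (Fin.rev i) j') * x (j', t) := by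
            refine Finset.sum_congr rfl fun i _ => ?_
            rw [hy]; rw [Finset.mul_sum]
            exact Finset.sum_congr rfl fun j' _ => by ring
        _ = ∑ j', (∑ i, A i j * A (Fin.rev i) j') * x (j', t) := by
            rw [Finset.sum_comm]
            exact Finset.sum_congr rfl fun j' _ => (Finset.sum_mul _ _ _).symm
        _ = ∑ j', (if j = j' then (-1 : F) else 0) * x (j', t) := by
            exact Finset.sum_congr rfl fun j' _ => by rw [hkey j j']
        _ = -x (j, t) := by
            simp [ite_mul, Finset.sum_ite_eq]
    rw [h2, neg_neg]
  exact hxu ▸ Submodule.mem_map_of_mem (fun i _ => huC i)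

end Dual

section MinDist
variable {F : Type*} [Field F] [DecidableEq F] {q m : ℕ}

open Polynomial in
lemma weight_bound (hq1 : 1 < q) (α : Fin q ≃ F) {A : Matrix (Fin q) (Fin q) F}
    (hdet : A.det ≠ 0) (hA : ∀ (r j : Fin q), (r : ℕ) < q - 1 → A r j = α j ^ (r : ℕ))
    (v : Fin q → Fin m → F) (hv : v ≠ 0) :
    ∃ ℓ : Fin q, v ℓ ≠ 0 ∧
      hammingNorm (v ℓ) * (q - (ℓ : ℕ)) ≤ hammingNorm (mpcMap (m := m) A v) := by
  classical
  set T : Finset (Fin q) := Finset.univ.filter (fun i => v i ≠ 0) with hT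
  have hTne : T.Nonempty := by
    by_contra h
    rw [Finset.not_nonempty_iff_eq_empty] at h
    apply hv
    funext i t
    have : i ∉ T := h ▸ Finset.notMem_empty i
    simp only [hT, Finset.mem_filter, Finset.mem_univ, true_and, not_not] at this
    rw [this]; rfl
  set ℓ : Fin q := T.max' hTne with hl
  have hvl : v ℓ ≠ 0 := by
    have := T.max'_mem hTne
    simpa [hT] using this
  have hTmax : ∀ i : Fin q, ℓ < i → v i = 0 := by
    intro i hi
    by_contra hne
    exact absurd (T.le_max' i (by simp [hT, hne])) (not_le.mpr hi)
  refine ⟨ℓ, hvl, ?_⟩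
  -- per-column bound
  have hcol : ∀ t : Fin m, v ℓ t ≠ 0 →
      q - (ℓ : ℕ) ≤ (Finset.univ.filter fun j => mpcMap (m := m) A v (j, t) ≠ 0).card := by
    intro t hvt
    set f : Fin q → F := fun j => ∑ i, A i j * v i t with hf
    have hfeq : ∀ j, mpcMap (m := m) A v (j, t) = f j := fun j => rfl
    have hzeros : (Finset.univ.filter fun j => f j = 0).card ≤ (ℓ : ℕ) := by
      by_cases hcase : (ℓ : ℕ) = q - 1
      · -- all rows: f ≠ 0 somewhere
        have hfne : ∃ j, f j ≠ 0 := by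
          by_contra hall
          push_neg at hall
          have h2 : ∀ j, ∑ i, A i j * v i t = ∑ i, A i j * (0 : Fin q → F) i := by
            intro j; simpa using hall j
          have := congrFun (vecMul_inj hdet h2) ℓ
          exact hvt this
        obtain ⟨j0, hj0⟩ := hfne
        have hssub : (Finset.univ.filter fun j => f j = 0) ⊆ Finset.univ.erase j0 := by
          intro a ha
          rw [Finset.mem_filter] at ha
          refine Finset.mem_erase.mpr ⟨fun h => hj0 (h ▸ ha.2), Finset.mem_univ a⟩
        calc (Finset.univ.filter fun j => f j = 0).card ≤ (Finset.univ.erase j0).card :=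
              Finset.card_le_card hssub
          _ = q - 1 := by rw [Finset.card_erase_of_mem (Finset.mem_univ j0)]; simp
          _ = (ℓ : ℕ) := hcase.symm
      · -- polynomial argument
        have hllt : (ℓ : ℕ) < q - 1 := by have := ℓ.2; omega
        set Q : Polynomial F := ∑ i : Fin q, Polynomial.C (v i t) * Polynomial.X ^ (i : ℕ)
          with hQ
        have hcoeffl : Q.coeff (ℓ : ℕ) = v ℓ t := by
          rw [hQ, Polynomial.finset_sum_coeff]
          rw [Finset.sum_eq_single ℓ]
          · simp
          · intro b _ hb
            rw [Polynomial.coeff_C_mul, Polynomial.coeff_X_pow,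
              if_neg (fun h => hb (Fin.ext h.symm)), mul_zero]
          · intro h; exact absurd (Finset.mem_univ ℓ) h
        have hcoeffh : ∀ k, (ℓ : ℕ) < k → Q.coeff k = 0 := by
          intro k hk
          rw [hQ, Polynomial.finset_sum_coeff]
          refine Finset.sum_eq_zero fun i _ => ?_
          rw [Polynomial.coeff_C_mul, Polynomial.coeff_X_pow]
          by_cases h : k = (i : ℕ)
          · have : ℓ < i := by rw [Fin.lt_def]; omega
            rw [hTmax i this]; simp
          · rw [if_neg h, mul_zero]
        have hQne : Q ≠ 0 := by
          intro h
          rw [h, Polynomial.coeff_zero] at hcoeffl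
          exact hvt hcoeffl.symm
        have hdeg : Q.natDegree ≤ (ℓ : ℕ) :=
          Polynomial.natDegree_le_iff_coeff_eq_zero.mpr fun k hk => hcoeffh k hk
        have heval : ∀ j, f j = Q.eval (α j) := by
          intro j
          rw [hQ, Polynomial.eval_finset_sum]
          refine Finset.sum_congr rfl fun i _ => ?_
          simp only [Polynomial.eval_mul, Polynomial.eval_C, Polynomial.eval_pow,
            Polynomial.eval_X]
          by_cases h : (i : ℕ) < q - 1
          · rw [hA i j h]; ring
          · have : ℓ < i := by rw [Fin.lt_def]; have := i.2; omega
            rw [hTmax i this]; simp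
        have hinj : Set.InjOn (fun j => α j)
            ((Finset.univ.filter fun j => f j = 0) : Finset (Fin q)) :=
          fun a _ b _ h => α.injective h
        have hmaps : ∀ j ∈ (Finset.univ.filter fun j => f j = 0),
            α j ∈ Q.roots.toFinset := by
          intro j hj
          rw [Finset.mem_filter] at hj
          rw [Multiset.mem_toFinset, Polynomial.mem_roots hQne]
          exact (heval j).symm.trans hj.2
        calc (Finset.univ.filter fun j => f j = 0).card ≤ Q.roots.toFinset.card :=
              Finset.card_le_card_of_injOn _ hmaps hinj
          _ ≤ Multiset.card Q.roots := Multiset.toFinset_card_le _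
          _ ≤ Q.natDegree := Polynomial.card_roots' Q
          _ ≤ (ℓ : ℕ) := hdeg
    have hcards := Finset.card_filter_add_card_filter_not
      (s := (Finset.univ : Finset (Fin q))) (p := fun j => f j = 0)
    have hcard_univ : (Finset.univ : Finset (Fin q)).card = q := by simp
    have hnn : (Finset.univ.filter fun j => ¬ f j = 0).card
        = (Finset.univ.filter fun j => mpcMap (m := m) A v (j, t) ≠ 0).card := by
      congr 1
    omega
  -- sum over columns
  have hsplit : hammingNorm (mpcMap (m := m) A v)
      = ∑ t : Fin m, (Finset.univ.filter fun j => mpcMap (m := m) A v (j, t) ≠ 0).card := by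
    rw [hammingNorm, Finset.card_filter, Fintype.sum_prod_type, Finset.sum_comm]
    exact Finset.sum_congr rfl fun t _ => (Finset.card_filter _ _).symm
  set T' : Finset (Fin m) := Finset.univ.filter (fun t => v ℓ t ≠ 0) with hT'
  have hT'card : T'.card = hammingNorm (v ℓ) := rfl
  calc hammingNorm (v ℓ) * (q - (ℓ : ℕ)) = ∑ _t ∈ T', (q - (ℓ : ℕ)) := by
        rw [Finset.sum_const, smul_eq_mul, hT'card]
    _ ≤ ∑ t ∈ T', (Finset.univ.filter fun j => mpcMap (m := m) A v (j, t) ≠ 0).card := by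
        refine Finset.sum_le_sum fun t ht => ?_
        rw [hT', Finset.mem_filter] at ht
        exact hcol t ht.2
    _ ≤ ∑ t : Fin m, (Finset.univ.filter fun j => mpcMap (m := m) A v (j, t) ≠ 0).card :=
        Finset.sum_le_sum_of_subset (Finset.subset_univ T')
    _ = hammingNorm (mpcMap (m := m) A v) := hsplit.symm

end MinDist

/-- if `C_{q-i+1}^{⊥E} ⊆ C_i` for all `i`, then the matrix-product code
`[C_1,…,C_q]·Ȧ` is Euclidean dual-containing, of length `qm`, dimension `Σ k_i` and
minimum distance at least `min_i d_i (q - i + 1)`. -/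
theorem stmt10 {F : Type*} [Field F] [Fintype F] [DecidableEq F] {p n q m : ℕ}
    (hp : p.Prime) (hodd : p ≠ 2) (hn : 0 < n) (hq : q = p ^ n)
    (hcard : Fintype.card F = q) (hqpos : 0 < q)
    (α : Fin q ≃ F) (h0 : α ⟨0, hqpos⟩ = 0)
    (C : Fin q → Submodule F (Fin m → F)) (k d : Fin q → ℕ)
    (hnz : ∀ i, C i ≠ ⊥)
    (hk : ∀ i, Module.finrank F (C i) = k i)
    (hd : ∀ i, dminS ((C i : Set (Fin m → F))) = d i)
    (hdual : ∀ i : Fin q, dualE ((C (Fin.rev i) : Set (Fin m → F))) ⊆ (C i : Set (Fin m → F))) :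
    ∃ S : Submodule F (Fin q × Fin m → F),
      (S : Set (Fin q × Fin m → F)) = mpcSet (fun i => (C i : Set (Fin m → F))) (Adot α p) ∧
      dualE (S : Set (Fin q × Fin m → F)) ⊆ (S : Set (Fin q × Fin m → F)) ∧
      Module.finrank F S = ∑ i, k i ∧
      sInf { v | ∃ i : Fin q, v = d i * (q - (i : ℕ)) } ≤
        dminS ((S : Set (Fin q × Fin m → F))) := by
  classical
  -- basic facts
  have hq1 : 1 < q := hq ▸ Nat.one_lt_pow hn.ne' hp.one_lt
  have hqF : (q : F) = 0 := by rw [← hcard]; exact FiniteField.cast_card_eq_zero F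
  have hpF : (p : F) = 0 := by
    have h1 : ((p : F)) ^ n = 0 := by rw [← Nat.cast_pow, ← hq, hqF]
    exact pow_eq_zero_iff hn.ne' |>.mp h1
  have heven : 2 ∣ (p - 1) := (Nat.Odd.sub_odd (hp.odd_of_ne_two hodd) odd_one).two_dvd
  have hc2 : 2 * (((p - 1) / 2 : ℕ) : F) = -1 := by
    have h1 : ((2 * ((p - 1) / 2) : ℕ) : F) = 2 * (((p - 1) / 2 : ℕ) : F) := by
      push_cast; ring
    rw [← h1, Nat.mul_div_cancel' heven, Nat.cast_sub hp.one_lt.le, hpF, Nat.cast_one, zero_sub]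
  have hdet : (Adot α p).det ≠ 0 := Adot_det_ne_zero hq1 α p
  set A := Adot α p with hAdef
  set S : Submodule F (Fin q × Fin m → F) :=
    Submodule.map (mpcMap (m := m) A) (Submodule.pi Set.univ C) with hS
  have hset : (S : Set (Fin q × Fin m → F))
      = mpcSet (fun i => (C i : Set (Fin m → F))) A := mpcSet_eq_map C A
  refine ⟨S, hset, ?_, ?_, ?_⟩
  · -- dual containing
    rw [hset, ← hset]
    exact dual_containing A (key_lemma hcard hq1 α hc2) C hdual
  · -- dimension
    rw [hS, finrank_mpc hdet C]
    exact Finset.sum_congr rfl fun i _ => hk i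
  · -- minimum distance
    have hApoly : ∀ (r j : Fin q), (r : ℕ) < q - 1 → A r j = α j ^ (r : ℕ) := by
      intro r j hr
      rw [hAdef, Adot_apply, if_neg (by omega)]
    -- the weight set of S is nonempty
    set W : Set ℕ := { w | ∃ c ∈ (S : Set (Fin q × Fin m → F)), c ≠ 0 ∧ hammingNorm c = w }
      with hW
    have hWne : W.Nonempty := by
      obtain ⟨w, hwC, hwne⟩ := Submodule.exists_mem_ne_zero_of_ne_bot (hnz ⟨0, hqpos⟩)
      set v : Fin q → Fin m → F := Pi.single ⟨0, hqpos⟩ w with hv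
      have hvpi : v ∈ Submodule.pi Set.univ C := by
        intro i _
        by_cases h : i = ⟨0, hqpos⟩
        · subst h; rw [hv, Pi.single_eq_same]; exact hwC
        · rw [hv, Pi.single_eq_of_ne h]; exact (C i).zero_mem
      have hvne : v ≠ 0 := by
        intro h
        apply hwne
        have := congrFun h ⟨0, hqpos⟩
        rwa [hv, Pi.single_eq_same] at this
      refine ⟨hammingNorm (mpcMap (m := m) A v), mpcMap (m := m) A v,
        Submodule.mem_map_of_mem hvpi, ?_, rfl⟩
      intro h
      exact hvne (mpcMap_injective hdet (h.trans (map_zero _).symm))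
    have hmem := Nat.sInf_mem hWne
    obtain ⟨c, hcS, hcne, hcw⟩ := hmem
    rw [hS] at hcS
    obtain ⟨v, hvpi, rfl⟩ := hcS
    have hvne : v ≠ 0 := by
      rintro rfl
      exact hcne (map_zero _)
    obtain ⟨ℓ, hvl, hbound⟩ := weight_bound hq1 α hdet hApoly v hvne
    have hdl : d ℓ ≤ hammingNorm (v ℓ) := by
      rw [← hd ℓ]
      exact Nat.sInf_le ⟨v ℓ, hvpi ℓ trivial, hvl, rfl⟩
    have hchain : d ℓ * (q - (ℓ : ℕ)) ≤ hammingNorm (mpcMap (m := m) A v) :=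
      le_trans (Nat.mul_le_mul_right _ hdl) hbound
    have h1 : sInf { v | ∃ i : Fin q, v = d i * (q - (i : ℕ)) } ≤ d ℓ * (q - (ℓ : ℕ)) :=
      Nat.sInf_le ⟨ℓ, rfl⟩
    calc sInf { v | ∃ i : Fin q, v = d i * (q - (i : ℕ)) } ≤ d ℓ * (q - (ℓ : ℕ)) := h1
      _ ≤ hammingNorm (mpcMap (m := m) A v) := hchain
      _ = dminS ((S : Set (Fin q × Fin m → F))) := hcw
end

section
/- Let q be a power of an odd prime p and let Ä be the q²×q² matrix over F_{q²} whose rows are a_1 = w_1, …, a_{q²−1} = w_{q²−1}, a_{q²} = w_{q²} + ((p−1)/2) w_1, where w_i is the evaluation of X^{i−1} at all points of F_{q²}. Let σ be the permutation of {1,…,q²} such that the permutation matrix −Ä Ä^† corresponds to σ (i.e., ⟨a_i, a_{σ(i)}⟩_H = −1 for all i). For i = 1,…,q², let C_i ⊆ F_{q²}^m be a nonzero linear code of dimension k_i and minimum distance d_i such that C_{σ(i)}^{⊥H} ⊆ C_i for all i. Then the matrix-product code C = [C_1,…,C_{q²}]·Ä is a Hermitian dual-containing linear code over F_{q²} of length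 q²m and dimension Σ_{i=1}^{q²} k_i, with minimum distance d(C) ≥ min_{1 ≤ i ≤ q²} d_i (q² + 1 − i). -/
open Finset Matrix

lemma psum7 {F : Type*} [Field F] [Fintype F] [DecidableEq F] (e : ℕ) :
    ∑ x : F, x ^ e = if e ≠ 0 ∧ (Fintype.card F - 1) ∣ e then -1 else 0 := by
  rcases eq_or_ne e 0 with rfl | he
  · simp [FiniteField.cast_card_eq_zero]
  · have h1 : ∑ x : F, x ^ e = ∑ x ∈ (univ : Finset F) \ {0}, x ^ e := by
      refine (Finset.sum_subset (Finset.sdiff_subset) ?_).symm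
      intro x _ hx
      have : x = 0 := by simpa using hx
      simp [this, zero_pow he]
    let φ : Fˣ ↪ F := ⟨fun x => x, Units.val_injective⟩
    have h2 : (univ : Finset Fˣ).map φ = (univ : Finset F) \ {0} := by
      ext x
      simp only [Finset.mem_map, Finset.mem_univ, Function.Embedding.coeFn_mk, true_and,
        Finset.mem_sdiff, Finset.mem_singleton, φ]
      exact isUnit_iff_ne_zero
    rw [h1, ← h2, Finset.sum_map]
    simp only [Function.Embedding.coeFn_mk, φ]
    have := FiniteField.sum_pow_units F e
    rw [this]
    simp [he]

lemma charF7 {F : Type*} [Field F] [Fintype F] {p n q : ℕ} (hp : p.Prime) (hn : 0 < n)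
    (hq : q = p ^ n) (hcard : Fintype.card F = q ^ 2) : CharP F p := by
  have h1 : ((p : F)) ^ (n * 2) = 0 := by
    have := FiniteField.cast_card_eq_zero F
    rw [hcard, hq] at this
    push_cast at this
    rw [← pow_mul] at this
    exact this
  have h2 : (p : F) = 0 := pow_eq_zero_iff (by positivity) |>.mp h1
  have h3 : ringChar F ∣ p := (CharP.cast_eq_zero_iff F (ringChar F) p).mp h2
  have h4 : (ringChar F).Prime := CharP.char_is_prime F (ringChar F)
  exact ringChar.eq_iff.mp ((Nat.prime_dvd_prime_iff_eq h4 hp).mp h3)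

lemma frobq7 {F : Type*} [Field F] [Fintype F] {p n q : ℕ} (hp : p.Prime) (hn : 0 < n)
    (hq : q = p ^ n) (hcard : Fintype.card F = q ^ 2) :
    ∃ φ : F →+* F, ∀ x : F, φ x = x ^ q := by
  haveI := charF7 hp hn hq hcard
  haveI : Fact p.Prime := ⟨hp⟩
  exact ⟨iterateFrobenius F p n, fun x => by rw [iterateFrobenius_def, hq]⟩

lemma adot_apply7 {F : Type*} [Field F] {Q : ℕ} (α : Fin Q ≃ F) (p : ℕ) (i j : Fin Q) :
    Adot α p i j =
      if (i : ℕ) = Q - 1 then (α j) ^ (Q - 1) + (((p - 1) / 2 : ℕ) : F)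
      else (α j) ^ (i : ℕ) := by
  have hiQ : (i : ℕ) < Q := i.isLt
  have : ((i : ℕ) + 1 = Q) ↔ ((i : ℕ) = Q - 1) := by omega
  simp only [Adot, Matrix.of_apply, av, this]
  split_ifs with h
  · simp [wv, Pi.add_apply, Pi.smul_apply, smul_eq_mul, mul_one]
  · simp [wv]

lemma adot_det7 {F : Type*} [Field F] {Q : ℕ} (α : Fin Q ≃ F) (p : ℕ)
    (t : ℕ) (ht : t ≤ Q) (htpos : 0 < t) (hQ2 : 2 ≤ Q)
    (c : Fin t → Fin Q) (hc : Function.Injective c) :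
    (Matrix.of fun r s : Fin t => Adot α p (Fin.castLE ht r) (c s)).det ≠ 0 := by
  set x : Fin t → F := fun s => α (c s) with hx
  have hxinj : Function.Injective x := fun a b hab => hc (α.injective hab)
  have hvdm : (Matrix.vandermonde x).det ≠ 0 := by
    rw [Matrix.det_vandermonde]
    refine Finset.prod_ne_zero_iff.mpr fun i _ => Finset.prod_ne_zero_iff.mpr fun j hj => ?_
    rw [Finset.mem_Ioi] at hj
    exact sub_ne_zero_of_ne fun hEq => (ne_of_gt hj) (hxinj hEq)
  set V : Matrix (Fin t) (Fin t) F := Matrix.of fun r s => x s ^ (r : ℕ) with hV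
  have hVdet : V.det ≠ 0 := by
    have : V = (Matrix.vandermonde x)ᵀ := by
      ext r s; simp [hV, Matrix.vandermonde, Matrix.transpose_apply]
    rw [this, Matrix.det_transpose]; exact hvdm
  by_cases hlast : t = Q
  · -- includes the modified last row
    subst hlast
    have ht1 : t - 1 < t := by omega
    set L : Fin t := ⟨t - 1, ht1⟩ with hL
    set Z : Fin t := ⟨0, htpos⟩ with hZ
    have hM : (Matrix.of fun r s : Fin t => Adot α p (Fin.castLE ht r) (c s)) =
        V.updateRow L (V L + (((p - 1) / 2 : ℕ) : F) • V Z) := by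
      ext r s
      simp only [Matrix.of_apply]
      rw [adot_apply7]
      by_cases hr : r = L
      · subst hr
        simp [Matrix.updateRow_self, hV, hL, hZ, x]
      · have hrv : (Fin.castLE ht r : ℕ) ≠ t - 1 := by
          intro hEq
          exact hr (Fin.ext (by simpa using hEq))
        rw [Matrix.updateRow_ne hr]
        simp only [Fin.coe_castLE] at hrv ⊢
        rw [if_neg hrv]
        simp [hV, x]
    rw [hM, Matrix.det_updateRow_add, Matrix.det_updateRow_smul, Matrix.updateRow_eq_self]
    have hdup : (V.updateRow L (V Z)).det = 0 := by
      refine Matrix.det_zero_of_row_eq (i := Z) (j := L) ?_ ?_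
      · intro hEq
        have : (0 : ℕ) = t - 1 := congrArg Fin.val (hZ ▸ hL ▸ hEq)
        omega
      · have hZL : Z ≠ L := by
          intro hEq
          have : (0 : ℕ) = t - 1 := congrArg Fin.val (hZ ▸ hL ▸ hEq)
          omega
        rw [Matrix.updateRow_ne hZL, Matrix.updateRow_self]
    rw [hdup]
    simpa using hVdet
  · have hM : (Matrix.of fun r s : Fin t => Adot α p (Fin.castLE ht r) (c s)) = V := by
      ext r s
      simp only [Matrix.of_apply]
      rw [adot_apply7, if_neg, hV]
      · simp [x]
      · have : (r : ℕ) < t := r.isLt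
        have : t < Q := lt_of_le_of_ne ht hlast
        simp only [Fin.coe_castLE]
        omega
    rw [hM]; exact hVdet

section
variable {F : Type*} [Field F] [Fintype F] [DecidableEq F] {p n q : ℕ}

lemma qge3 (hp : p.Prime) (hodd : p ≠ 2) (hn : 0 < n) (hq : q = p ^ n) : 3 ≤ q := by
  have h2 := hp.two_le
  have h3 : 3 ≤ p := by
    rcases Nat.lt_or_ge p 3 with h | h
    · interval_cases p <;> simp_all
    · exact h
  have hple : p ≤ p ^ n := Nat.le_self_pow hn.ne' p
  omega

lemma gram_cond7 (hp : p.Prime) (hodd : p ≠ 2) (hn : 0 < n) (hq : q = p ^ n)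
    (hcard : Fintype.card F = q ^ 2) (α : Fin (q ^ 2) ≃ F) (i ℓ : Fin (q ^ 2))
    (h : ∑ t, Adot α p i t * (Adot α p ℓ t) ^ q ≠ 0) :
    (q ^ 2 - 1) ∣ ((i : ℕ) + q * (ℓ : ℕ)) ∧ ¬((i : ℕ) = 0 ∧ (ℓ : ℕ) = 0) ∧
      ¬((i : ℕ) = q ^ 2 - 1 ∧ (ℓ : ℕ) = q ^ 2 - 1) := by
  obtain ⟨φ, hφ⟩ := frobq7 hp hn hq hcard
  haveI := charF7 hp hn hq hcard
  have hq3 : 3 ≤ q := qge3 hp hodd hn hq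
  have hq2ge : 9 ≤ q ^ 2 := by nlinarith
  set N : ℕ := q ^ 2 - 1 with hNdef
  have hN2 : 2 ≤ N := by omega
  haveI : NeZero N := ⟨by omega⟩
  set cc : F := (((p - 1) / 2 : ℕ) : F) with hcc
  have hP : ∀ e : ℕ, ∑ x : F, x ^ e = if e ≠ 0 ∧ N ∣ e then -1 else 0 := by
    intro e
    rw [psum7 e, hcard]
  have hdvdqN : N ∣ q * N := ⟨q, by ring⟩
  have hiN : (i : ℕ) ≤ N := by have := i.isLt; omega
  have hlN : (ℓ : ℕ) ≤ N := by have := ℓ.isLt; omega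
  have hq2modN : ((q : ZMod N)) * (q : ZMod N) = 1 := by
    have hcast : ((q * q : ℕ) : ZMod N) = ((N + 1 : ℕ) : ZMod N) := by
      congr 1
      have : q * q = q ^ 2 := by ring
      omega
    push_cast at hcast
    rw [ZMod.natCast_self] at hcast
    simpa using hcast
  have hNqdvd : ∀ b : ℕ, b < N → N ∣ q * b → b = 0 := by
    intro b hb hdvd
    have h0 : ((q * b : ℕ) : ZMod N) = 0 := (ZMod.natCast_eq_zero_iff _ _).mpr hdvd
    push_cast at h0
    have hb0 : ((b : ℕ) : ZMod N) = 0 := by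
      calc (b : ZMod N) = ((q : ZMod N) * q) * b := by rw [hq2modN, one_mul]
        _ = (q : ZMod N) * ((q : ZMod N) * b) := by ring
        _ = 0 := by rw [h0, mul_zero]
    have hdvd' := (ZMod.natCast_eq_zero_iff _ _).mp hb0
    rcases Nat.eq_zero_or_pos b with h' | h'
    · exact h'
    · exact absurd (Nat.le_of_dvd h' hdvd') (by omega)
  have hsum : ∑ t, Adot α p i t * (Adot α p ℓ t) ^ q
      = ∑ x : F, ((if (i : ℕ) = N then x ^ N + cc else x ^ (i : ℕ)) *
          (if (ℓ : ℕ) = N then x ^ (q * N) + cc else x ^ (q * (ℓ : ℕ)))) := by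
    rw [← Equiv.sum_comp α (fun x : F => ((if (i : ℕ) = N then x ^ N + cc else x ^ (i : ℕ)) *
          (if (ℓ : ℕ) = N then x ^ (q * N) + cc else x ^ (q * (ℓ : ℕ)))))]
    refine Finset.sum_congr rfl fun t _ => ?_
    rw [adot_apply7, adot_apply7, ← hNdef, ← hcc]
    congr 1
    split_ifs with h'
    · rw [← hφ, map_add, hφ, ← pow_mul, mul_comm N q, hcc, map_natCast]
    · rw [← pow_mul, mul_comm]
  rw [hsum] at h
  by_cases hi : (i : ℕ) = N <;> by_cases hl : (ℓ : ℕ) = N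
  · exfalso
    apply h
    have hpt : ∀ x ∈ (univ : Finset F), ((if (i : ℕ) = N then x ^ N + cc else x ^ (i : ℕ)) *
          (if (ℓ : ℕ) = N then x ^ (q * N) + cc else x ^ (q * (ℓ : ℕ))))
        = x ^ (N + q * N) + cc * x ^ N + cc * x ^ (q * N) + cc * cc * x ^ 0 := by
      intro x _
      rw [if_pos hi, if_pos hl, pow_add, pow_zero]
      ring
    rw [Finset.sum_congr rfl hpt, Finset.sum_add_distrib, Finset.sum_add_distrib,
      Finset.sum_add_distrib, ← Finset.mul_sum, ← Finset.mul_sum, ← Finset.mul_sum,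
      hP, hP, hP, hP]
    rw [if_pos ⟨by omega, ⟨1 + q, by ring⟩⟩, if_pos ⟨by omega, dvd_refl N⟩,
      if_pos ⟨Nat.mul_ne_zero (by omega) (by omega), hdvdqN⟩, if_neg (by simp)]
    have h2cc : cc + cc = -1 := by
      have h2 : (p - 1) / 2 + (p - 1) / 2 = p - 1 := by
        have := hp.two_le
        obtain ⟨k, hk⟩ := hp.odd_of_ne_two hodd
        omega
      rw [hcc, ← Nat.cast_add, h2]
      have hcast : ((p - 1 : ℕ) : F) = (p : F) - 1 := by
        have := hp.two_le
        push_cast [Nat.cast_sub (by omega : 1 ≤ p)]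
        ring
      rw [hcast, CharP.cast_eq_zero F p]
      ring
    linear_combination -h2cc
  · have hlltN : (ℓ : ℕ) < N := lt_of_le_of_ne hlN hl
    have hpt : ∀ x ∈ (univ : Finset F), ((if (i : ℕ) = N then x ^ N + cc else x ^ (i : ℕ)) *
          (if (ℓ : ℕ) = N then x ^ (q * N) + cc else x ^ (q * (ℓ : ℕ))))
        = x ^ (N + q * (ℓ : ℕ)) + cc * x ^ (q * (ℓ : ℕ)) := by
      intro x _
      rw [if_pos hi, if_neg hl, pow_add]
      ring
    rw [Finset.sum_congr rfl hpt, Finset.sum_add_distrib, ← Finset.mul_sum] at h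
    have hPz : (∑ x : F, x ^ (q * (ℓ : ℕ))) = 0 := by
      rw [hP, if_neg]
      rintro ⟨hne, hdvd⟩
      exact hne (by rw [hNqdvd _ hlltN hdvd, mul_zero])
    rw [hPz, mul_zero, add_zero, hP] at h
    have hcond : N + q * (ℓ : ℕ) ≠ 0 ∧ N ∣ N + q * (ℓ : ℕ) := by
      by_contra hc
      rw [if_neg hc] at h
      exact h rfl
    exact ⟨by rw [hi]; exact hcond.2, by omega, by omega⟩
  · have hiltN : (i : ℕ) < N := lt_of_le_of_ne hiN hi
    have hpt : ∀ x ∈ (univ : Finset F), ((if (i : ℕ) = N then x ^ N + cc else x ^ (i : ℕ)) *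
          (if (ℓ : ℕ) = N then x ^ (q * N) + cc else x ^ (q * (ℓ : ℕ))))
        = x ^ ((i : ℕ) + q * N) + cc * x ^ (i : ℕ) := by
      intro x _
      rw [if_neg hi, if_pos hl, pow_add]
      ring
    rw [Finset.sum_congr rfl hpt, Finset.sum_add_distrib, ← Finset.mul_sum] at h
    have hPz : (∑ x : F, x ^ (i : ℕ)) = 0 := by
      rw [hP, if_neg]
      rintro ⟨hne, hdvd⟩
      exact hne (Nat.eq_zero_of_dvd_of_lt hdvd hiltN)
    rw [hPz, mul_zero, add_zero, hP] at h
    have hcond : (i : ℕ) + q * N ≠ 0 ∧ N ∣ (i : ℕ) + q * N := by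
      by_contra hc
      rw [if_neg hc] at h
      exact h rfl
    exact ⟨by rw [hl]; exact hcond.2, by omega, by omega⟩
  · have hpt : ∀ x ∈ (univ : Finset F), ((if (i : ℕ) = N then x ^ N + cc else x ^ (i : ℕ)) *
          (if (ℓ : ℕ) = N then x ^ (q * N) + cc else x ^ (q * (ℓ : ℕ))))
        = x ^ ((i : ℕ) + q * (ℓ : ℕ)) := by
      intro x _
      rw [if_neg hi, if_neg hl, pow_add]
    rw [Finset.sum_congr rfl hpt, hP] at h
    have hcond : (i : ℕ) + q * (ℓ : ℕ) ≠ 0 ∧ N ∣ (i : ℕ) + q * (ℓ : ℕ) := by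
      by_contra hc
      rw [if_neg hc] at h
      exact h rfl
    refine ⟨hcond.2, fun hz => hcond.1 (by rw [hz.1, hz.2]; simp), by omega⟩

lemma gram_unique7 (hp : p.Prime) (hodd : p ≠ 2) (hn : 0 < n) (hq : q = p ^ n)
    (hcard : Fintype.card F = q ^ 2) (α : Fin (q ^ 2) ≃ F) (i ℓ ℓ' : Fin (q ^ 2))
    (h1 : ∑ t, Adot α p i t * (Adot α p ℓ t) ^ q ≠ 0)
    (h2 : ∑ t, Adot α p i t * (Adot α p ℓ' t) ^ q ≠ 0) : ℓ = ℓ' := by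
  obtain ⟨d1, e1, f1⟩ := gram_cond7 hp hodd hn hq hcard α i ℓ h1
  obtain ⟨d2, e2, f2⟩ := gram_cond7 hp hodd hn hq hcard α i ℓ' h2
  have hq3 : 3 ≤ q := qge3 hp hodd hn hq
  have hq2ge : 9 ≤ q ^ 2 := by nlinarith
  set N : ℕ := q ^ 2 - 1 with hNdef
  have hN2 : 2 ≤ N := by omega
  haveI : NeZero N := ⟨by omega⟩
  have hiN : (i : ℕ) ≤ N := by have := i.isLt; omega
  have hlN : (ℓ : ℕ) ≤ N := by have := ℓ.isLt; omega
  have hl'N : (ℓ' : ℕ) ≤ N := by have := ℓ'.isLt; omega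
  have hq2modN : ((q : ZMod N)) * (q : ZMod N) = 1 := by
    have hcast : ((q * q : ℕ) : ZMod N) = ((N + 1 : ℕ) : ZMod N) := by
      congr 1
      have : q * q = q ^ 2 := by ring
      omega
    push_cast at hcast
    rw [ZMod.natCast_self] at hcast
    simpa using hcast
  have c1 : ((i : ℕ) : ZMod N) + (q : ZMod N) * ((ℓ : ℕ) : ZMod N) = 0 := by
    have := (ZMod.natCast_eq_zero_iff _ N).mpr d1
    push_cast at this
    exact this
  have c2 : ((i : ℕ) : ZMod N) + (q : ZMod N) * ((ℓ' : ℕ) : ZMod N) = 0 := by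
    have := (ZMod.natCast_eq_zero_iff _ N).mpr d2
    push_cast at this
    exact this
  have hll' : ((ℓ : ℕ) : ZMod N) = ((ℓ' : ℕ) : ZMod N) := by
    have hql : (q : ZMod N) * ((ℓ : ℕ) : ZMod N) = (q : ZMod N) * ((ℓ' : ℕ) : ZMod N) := by
      linear_combination c1 - c2
    calc ((ℓ : ℕ) : ZMod N) = ((q : ZMod N) * q) * ((ℓ : ℕ) : ZMod N) := by
          rw [hq2modN, one_mul]
      _ = (q : ZMod N) * ((q : ZMod N) * ((ℓ : ℕ) : ZMod N)) := by ring
      _ = (q : ZMod N) * ((q : ZMod N) * ((ℓ' : ℕ) : ZMod N)) := by rw [hql]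
      _ = ((q : ZMod N) * q) * ((ℓ' : ℕ) : ZMod N) := by ring
      _ = ((ℓ' : ℕ) : ZMod N) := by rw [hq2modN, one_mul]
  have hmod : (ℓ : ℕ) % N = (ℓ' : ℕ) % N := (ZMod.natCast_eq_natCast_iff _ _ _).mp hll'
  by_cases hcl : (ℓ : ℕ) = N <;> by_cases hcl' : (ℓ' : ℕ) = N
  · exact Fin.ext (by omega)
  · -- ℓ = N, ℓ' < N : derive contradiction
    exfalso
    have hl'0 : (ℓ' : ℕ) = 0 := by
      rw [hcl, Nat.mod_self, Nat.mod_eq_of_lt (by omega)] at hmod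
      omega
    have hdI : N ∣ (i : ℕ) := by
      have := d2
      rw [hl'0, mul_zero, add_zero] at this
      exact this
    have hi0 : (i : ℕ) ≠ 0 := fun h' => e2 ⟨h', hl'0⟩
    have : (i : ℕ) = N := le_antisymm hiN (Nat.le_of_dvd (by omega) hdI)
    exact f1 ⟨this, hcl⟩
  · exfalso
    have hl0 : (ℓ : ℕ) = 0 := by
      rw [hcl', Nat.mod_self, Nat.mod_eq_of_lt (by omega)] at hmod
      omega
    have hdI : N ∣ (i : ℕ) := by
      have := d1
      rw [hl0, mul_zero, add_zero] at this
      exact this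
    have hi0 : (i : ℕ) ≠ 0 := fun h' => e1 ⟨h', hl0⟩
    have : (i : ℕ) = N := le_antisymm hiN (Nat.le_of_dvd (by omega) hdI)
    exact f2 ⟨this, hcl'⟩
  · refine Fin.ext ?_
    rw [Nat.mod_eq_of_lt (by omega), Nat.mod_eq_of_lt (by omega)] at hmod
    exact hmod
end

section
variable {F : Type*} [Field F]

/-- The matrix-product map on the product of the codes. -/
def bigL7 {s m : ℕ} (A : Matrix (Fin s) (Fin s) F)
    (C : Fin s → Submodule F (Fin m → F)) : (∀ i, ↥(C i)) →ₗ[F] (Fin s × Fin m → F) where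
  toFun w := fun x => ∑ i, A i x.1 * (w i : Fin m → F) x.2
  map_add' u v := by
    funext x
    simp only [Pi.add_apply, Submodule.coe_add]
    rw [← Finset.sum_add_distrib]
    exact Finset.sum_congr rfl fun i _ => by simp [mul_add]
  map_smul' a v := by
    funext x
    simp only [Pi.smul_apply, SetLike.val_smul, smul_eq_mul, RingHom.id_apply]
    rw [Finset.mul_sum]
    exact Finset.sum_congr rfl fun i _ => by ring

lemma comb_inj7 {s m : ℕ} {A : Matrix (Fin s) (Fin s) F}
    (hdet : A.det ≠ 0) {v : Fin s → Fin m → F}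
    (h : ∀ (j : Fin s) (t : Fin m), ∑ i, A i j * v i t = 0) : ∀ i, v i = 0 := by
  have hinj : Function.Injective Aᵀ.mulVec := by
    rw [Matrix.mulVec_injective_iff_isUnit]
    apply (Matrix.isUnit_iff_isUnit_det _).mpr
    rw [Matrix.det_transpose]
    exact hdet.isUnit
  intro i
  funext t
  have h0 : Aᵀ.mulVec (fun i => v i t) = Aᵀ.mulVec 0 := by
    funext j
    rw [Matrix.mulVec_zero]
    show ∑ i, Aᵀ j i * v i t = (0 : Fin s → F) j
    simp only [Matrix.transpose_apply, Pi.zero_apply]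
    exact h j t
  exact congrFun (hinj h0) i

lemma range_carrier7 {s m : ℕ} (A : Matrix (Fin s) (Fin s) F)
    (C : Fin s → Submodule F (Fin m → F)) :
    ((LinearMap.range (bigL7 A C) : Submodule F (Fin s × Fin m → F)) : Set (Fin s × Fin m → F))
      = mpcSet (fun i => (C i : Set (Fin m → F))) A := by
  ext c
  simp only [SetLike.mem_coe, LinearMap.mem_range]
  constructor
  · rintro ⟨w, rfl⟩
    exact ⟨fun i => (w i : Fin m → F), fun i => (w i).2, fun x => rfl⟩
  · rintro ⟨v, hv, hx⟩
    exact ⟨fun i => ⟨v i, hv i⟩, by funext x; exact (hx x).symm⟩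

lemma single_sum7 {s m : ℕ} (A : Matrix (Fin s) (Fin s) F) (i0 : Fin s)
    (z : Fin m → F) (j : Fin s) (t : Fin m) :
    ∑ i, A i j * (if i = i0 then z else 0) t = A i0 j * z t := by
  classical
  have hpt : ∀ i ∈ (univ : Finset (Fin s)),
      A i j * (if i = i0 then z else 0) t = if i = i0 then A i j * z t else 0 := by
    intro i _
    split_ifs <;> simp
  rw [Finset.sum_congr rfl hpt, Finset.sum_ite_eq' univ i0 (fun i => A i j * z t)]
  simp
end

/-- if `σ` is the permutation with `⟨a_i, a_{σ(i)}⟩_H = -1` and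
`C_{σ(i)}^{⊥H} ⊆ C_i` for all `i`, then `[C_1,…,C_{q²}]·Ä` is Hermitian dual-containing,
of length `q²m`, dimension `Σ k_i` and minimum distance at least `min_i d_i (q² + 1 - i)`. -/
theorem stmt11 {F : Type*} [Field F] [Fintype F] [DecidableEq F] {p n q m : ℕ}
    (hp : p.Prime) (hodd : p ≠ 2) (hn : 0 < n) (hq : q = p ^ n)
    (hcard : Fintype.card F = q ^ 2) (hpos : 0 < q ^ 2)
    (α : Fin (q ^ 2) ≃ F) (h0 : α ⟨0, hpos⟩ = 0)
    (σ : Equiv.Perm (Fin (q ^ 2)))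
    (hσ : ∀ i : Fin (q ^ 2), ∑ t, Adot α p i t * (Adot α p (σ i) t) ^ q = -1)
    (C : Fin (q ^ 2) → Submodule F (Fin m → F)) (k d : Fin (q ^ 2) → ℕ)
    (hnz : ∀ i, C i ≠ ⊥)
    (hk : ∀ i, Module.finrank F (C i) = k i)
    (hd : ∀ i, dminS ((C i : Set (Fin m → F))) = d i)
    (hdual : ∀ i : Fin (q ^ 2),
      dualH q ((C (σ i) : Set (Fin m → F))) ⊆ (C i : Set (Fin m → F))) :
    ∃ S : Submodule F (Fin (q ^ 2) × Fin m → F),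
      (S : Set (Fin (q ^ 2) × Fin m → F)) =
        mpcSet (fun i => (C i : Set (Fin m → F))) (Adot α p) ∧
      dualH q (S : Set (Fin (q ^ 2) × Fin m → F)) ⊆ (S : Set (Fin (q ^ 2) × Fin m → F)) ∧
      Module.finrank F S = ∑ i, k i ∧
      sInf { v | ∃ i : Fin (q ^ 2), v = d i * (q ^ 2 - (i : ℕ)) } ≤
        dminS ((S : Set (Fin (q ^ 2) × Fin m → F))) := by
  classical
  have hq3 : 3 ≤ q := qge3 hp hodd hn hq
  have hQ2 : 2 ≤ q ^ 2 := by nlinarith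
  set A : Matrix (Fin (q ^ 2)) (Fin (q ^ 2)) F := Adot α p with hA
  have hdet : A.det ≠ 0 := by
    have h := adot_det7 α p (q ^ 2) le_rfl hpos hQ2 id Function.injective_id
    have heq : (Matrix.of fun r s : Fin (q ^ 2) =>
        Adot α p (Fin.castLE le_rfl r) (id s)) = A := by
      ext r s
      simp [Fin.castLE, hA]
    rwa [heq] at h
  set S : Submodule F (Fin (q ^ 2) × Fin m → F) := LinearMap.range (bigL7 A C) with hS
  have hcar : (S : Set (Fin (q ^ 2) × Fin m → F))
      = mpcSet (fun i => (C i : Set (Fin m → F))) A := range_carrier7 A C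
  have hGne : ∀ i : Fin (q ^ 2), ∑ t, A i t * (A (σ i) t) ^ q ≠ 0 := by
    intro i
    rw [hσ i]
    exact neg_ne_zero.mpr one_ne_zero
  have hGzero : ∀ i ℓ : Fin (q ^ 2), ℓ ≠ σ i → ∑ t, A i t * (A ℓ t) ^ q = 0 := by
    intro i ℓ hne
    by_contra hne0
    exact hne (gram_unique7 hp hodd hn hq hcard α i ℓ (σ i) hne0 (hGne i))
  refine ⟨S, hcar, ?_, ?_, ?_⟩
  · -- dual containing
    intro x hx
    set u : Fin (q ^ 2) → Fin m → F :=
      fun i t => (Aᵀ⁻¹ *ᵥ fun j => x (j, t)) i with hu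
    have hAtu : IsUnit Aᵀ.det := by
      rw [Matrix.det_transpose]
      exact hdet.isUnit
    have hX : ∀ (j : Fin (q ^ 2)) (t : Fin m), x (j, t) = ∑ i, A i j * u i t := by
      intro j t
      have h1 : Aᵀ *ᵥ (Aᵀ⁻¹ *ᵥ fun j' => x (j', t)) = fun j' => x (j', t) := by
        rw [Matrix.mulVec_mulVec, Matrix.mul_nonsing_inv _ hAtu, Matrix.one_mulVec]
      have h2 := congrFun h1 j
      have h3 : (Aᵀ *ᵥ (Aᵀ⁻¹ *ᵥ fun j' => x (j', t))) j = ∑ i, A i j * u i t := by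
        show ∑ i, Aᵀ j i * (Aᵀ⁻¹ *ᵥ fun j' => x (j', t)) i = ∑ i, A i j * u i t
        exact Finset.sum_congr rfl fun i _ => by rw [Matrix.transpose_apply]
      rw [← h3, h2]
    have hY : ∀ i0 : Fin (q ^ 2), u i0 ∈ (C i0 : Set (Fin m → F)) := by
      intro i0
      apply hdual i0
      intro w hw
      set c : Fin (q ^ 2) × Fin m → F := fun y => A (σ i0) y.1 * w y.2 with hc
      have hcS : c ∈ (S : Set (Fin (q ^ 2) × Fin m → F)) := by
        rw [hcar]
        refine ⟨fun ℓ => if ℓ = σ i0 then w else 0, ?_, ?_⟩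
        · intro ℓ
          dsimp only
          split_ifs with h'
          · rw [h']; exact hw
          · exact (C ℓ).zero_mem
        · intro y
          exact (single_sum7 A (σ i0) w y.1 y.2).symm
      have hx0 : ∑ y : Fin (q ^ 2) × Fin m, x y * (c y) ^ q = 0 := hx c hcS
      rw [Fintype.sum_prod_type] at hx0
      have hstep : ∀ j ∈ (univ : Finset (Fin (q ^ 2))),
          ∑ t : Fin m, x (j, t) * (c (j, t)) ^ q
          = ∑ t : Fin m, ∑ i : Fin (q ^ 2),
              (A i j * (A (σ i0) j) ^ q) * (u i t * (w t) ^ q) := by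
        intro j _
        refine Finset.sum_congr rfl fun t _ => ?_
        show x (j, t) * (A (σ i0) j * w t) ^ q = _
        rw [mul_pow, hX j t, Finset.sum_mul]
        refine Finset.sum_congr rfl fun i _ => ?_
        ring
      rw [Finset.sum_congr rfl hstep] at hx0
      have hswap2 : ∑ i : Fin (q ^ 2), (∑ j, A i j * (A (σ i0) j) ^ q) *
            (∑ t, u i t * (w t) ^ q)
          = ∑ j : Fin (q ^ 2), ∑ t : Fin m, ∑ i : Fin (q ^ 2),
              (A i j * (A (σ i0) j) ^ q) * (u i t * (w t) ^ q) := by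
        have h1 : ∀ i ∈ (univ : Finset (Fin (q ^ 2))),
            (∑ j, A i j * (A (σ i0) j) ^ q) * (∑ t, u i t * (w t) ^ q)
            = ∑ j : Fin (q ^ 2), ∑ t : Fin m,
                (A i j * (A (σ i0) j) ^ q) * (u i t * (w t) ^ q) := by
          intro i _
          rw [Finset.sum_mul_sum]
        rw [Finset.sum_congr rfl h1, Finset.sum_comm]
        exact Finset.sum_congr rfl fun j _ => Finset.sum_comm
      rw [← hswap2] at hx0
      have hsingle : ∑ i : Fin (q ^ 2), (∑ j, A i j * (A (σ i0) j) ^ q) *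
            (∑ t, u i t * (w t) ^ q)
          = (∑ j, A i0 j * (A (σ i0) j) ^ q) * (∑ t, u i0 t * (w t) ^ q) := by
        apply Finset.sum_eq_single
        · intro i _ hne
          rw [hGzero i (σ i0) (fun hEq => hne (σ.injective hEq).symm), zero_mul]
        · intro h'
          exact absurd (Finset.mem_univ i0) h'
      rw [hsingle, hσ i0, neg_one_mul, neg_eq_zero] at hx0
      exact hx0
    rw [hcar]
    exact ⟨u, hY, fun y => hX y.1 y.2⟩
  · -- dimension
    have hinj : Function.Injective (bigL7 A C) := by
      rw [injective_iff_map_eq_zero]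
      intro w hw
      have h1 : ∀ (j : Fin (q ^ 2)) (t : Fin m),
          ∑ i, A i j * ((w i : Fin m → F)) t = 0 := by
        intro j t
        exact congrFun hw (j, t)
      have hz := comb_inj7 hdet h1
      funext i
      exact Subtype.ext (hz i)
    rw [hS, LinearMap.finrank_range_of_inj hinj, Module.finrank_pi_fintype]
    exact Finset.sum_congr rfl fun i _ => hk i
  · -- minimum distance
    set D : Set ℕ := { v | ∃ i : Fin (q ^ 2), v = d i * (q ^ 2 - (i : ℕ)) } with hD
    set W : Set ℕ := { w | ∃ c ∈ (S : Set (Fin (q ^ 2) × Fin m → F)),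
        c ≠ 0 ∧ hammingNorm c = w } with hW
    have hdmin : dminS ((S : Set (Fin (q ^ 2) × Fin m → F))) = sInf W := rfl
    -- W is nonempty
    obtain ⟨z0, hz0m, hz0⟩ := Submodule.exists_mem_ne_zero_of_ne_bot (hnz ⟨0, hpos⟩)
    set i0 : Fin (q ^ 2) := ⟨0, hpos⟩ with hi0
    set c1 : Fin (q ^ 2) × Fin m → F := fun y => A i0 y.1 * z0 y.2 with hc1
    have hc1mem : c1 ∈ (S : Set (Fin (q ^ 2) × Fin m → F)) := by
      rw [hcar]
      refine ⟨fun ℓ => if ℓ = i0 then z0 else 0, ?_, ?_⟩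
      · intro ℓ
        dsimp only
        split_ifs with h'
        · rw [h']; exact hz0m
        · exact (C ℓ).zero_mem
      · intro y
        exact (single_sum7 A i0 z0 y.1 y.2).symm
    have hc1ne : c1 ≠ 0 := by
      intro hzero
      have h1 : ∀ (j : Fin (q ^ 2)) (t : Fin m),
          ∑ i, A i j * (fun ℓ => if ℓ = i0 then z0 else 0) i t = 0 := by
        intro j t
        rw [single_sum7 A i0 z0 j t]
        exact congrFun hzero (j, t)
      have hz := comb_inj7 hdet h1
      have := hz i0
      simp only [if_pos rfl] at this
      exact hz0 this
    have hWne : W.Nonempty := ⟨hammingNorm c1, c1, hc1mem, hc1ne, rfl⟩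
    obtain ⟨c0, hc0S, hc0ne, hc0w⟩ := Nat.sInf_mem hWne
    rw [hdmin, ← hc0w]
    -- decompose c0
    rw [hcar] at hc0S
    obtain ⟨v, hvC, hvx⟩ := hc0S
    have hvne : ∃ i, v i ≠ 0 := by
      by_contra hall
      push_neg at hall
      apply hc0ne
      funext y
      rw [hvx y]
      simp [hall]
    obtain ⟨iw, hiw⟩ := hvne
    set T : Finset (Fin (q ^ 2)) := univ.filter (fun i => v i ≠ 0) with hT
    have hTne : T.Nonempty := ⟨iw, by simp [hT, hiw]⟩
    set kk : Fin (q ^ 2) := T.max' hTne with hkk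
    have hkkT : kk ∈ T := T.max'_mem hTne
    have hvkk : v kk ≠ 0 := by
      have := hkkT
      rw [hT, Finset.mem_filter] at this
      exact this.2
    have hmax : ∀ i : Fin (q ^ 2), v i ≠ 0 → i ≤ kk := by
      intro i hi
      exact T.le_max' i (by simp [hT, hi])
    have hvz : ∀ i : Fin (q ^ 2), kk < i → v i = 0 := by
      intro i hgt
      by_contra hne
      exact absurd (hmax i hne) (not_le.mpr hgt)
    have hkk1 : (kk : ℕ) + 1 ≤ q ^ 2 := kk.isLt
    -- the key column-count claim
    have hclaim : ∀ t : Fin m, v kk t ≠ 0 →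
        q ^ 2 - (kk : ℕ) ≤ (univ.filter fun j : Fin (q ^ 2) => c0 (j, t) ≠ 0).card := by
      intro t ht
      by_contra hlt
      push_neg at hlt
      have hcards := Finset.card_filter_add_card_filter_not
        (s := (univ : Finset (Fin (q ^ 2)))) (p := fun j => c0 (j, t) ≠ 0)
      rw [Finset.card_univ, Fintype.card_fin] at hcards
      set Z : Finset (Fin (q ^ 2)) := univ.filter (fun j => ¬ c0 (j, t) ≠ 0) with hZ
      have hZcard : (kk : ℕ) + 1 ≤ Z.card := by omega
      obtain ⟨Z', hZ'sub, hZ'card⟩ := Finset.exists_subset_card_eq hZcard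
      set cemb := Z'.orderIsoOfFin hZ'card with hcemb
      set cfun : Fin ((kk : ℕ) + 1) → Fin (q ^ 2) := fun r => (cemb r : Fin (q ^ 2)) with hcfun
      have hcinj : Function.Injective cfun := by
        intro a b hab
        exact cemb.injective (Subtype.ext hab)
      have hdet' := adot_det7 α p ((kk : ℕ) + 1) hkk1 (Nat.succ_pos _) hQ2 cfun hcinj
      set M : Matrix (Fin ((kk : ℕ) + 1)) (Fin ((kk : ℕ) + 1)) F :=
        Matrix.of fun r s => A (Fin.castLE hkk1 r) (cfun s) with hM
      have hMunit : IsUnit M := (Matrix.isUnit_iff_isUnit_det M).mpr hdet'.isUnit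
      set uvec : Fin ((kk : ℕ) + 1) → F := fun r => v (Fin.castLE hkk1 r) t with huvec
      -- truncated sum identity
      have htr : ∀ j : Fin (q ^ 2),
          ∑ i : Fin (q ^ 2), A i j * v i t
          = ∑ r : Fin ((kk : ℕ) + 1), A (Fin.castLE hkk1 r) j * v (Fin.castLE hkk1 r) t := by
        intro j
        rw [← Finset.sum_subset
          (Finset.subset_univ (univ.filter fun i : Fin (q ^ 2) => (i : ℕ) < (kk : ℕ) + 1))
          (fun i _ hni => by
            rw [Finset.mem_filter, not_and] at hni
            have h' : ¬ (i : ℕ) < (kk : ℕ) + 1 := hni (Finset.mem_univ i)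
            have hgt : kk < i := by
              rw [Fin.lt_def]
              omega
            simp [hvz i hgt])]
        refine (Finset.sum_bij' (fun (r : Fin ((kk : ℕ) + 1)) _ => Fin.castLE hkk1 r)
          (fun (i : Fin (q ^ 2)) hi => (⟨(i : ℕ), by
            rw [Finset.mem_filter] at hi
            exact hi.2⟩ : Fin ((kk : ℕ) + 1)))
          ?_ ?_ ?_ ?_ ?_).symm
        · intro r _
          rw [Finset.mem_filter]
          exact ⟨Finset.mem_univ _, r.isLt⟩
        · intro i _
          exact Finset.mem_univ _
        · intro r _
          rfl
        · intro i _
          rfl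
        · intro r _
          rfl
      have hvm : uvec ᵥ* M = 0 := by
        funext s
        show ∑ r, uvec r * M r s = 0
        have hZ's : cfun s ∈ Z := hZ'sub (cemb s).2
        have hc0z : c0 (cfun s, t) = 0 := by
          rw [hZ, Finset.mem_filter] at hZ's
          push_neg at hZ's
          exact hZ's.2
        have := hvx (cfun s, t)
        rw [hc0z] at this
        have h2 : ∑ i : Fin (q ^ 2), A i (cfun s) * v i t = 0 := this.symm
        rw [htr (cfun s)] at h2
        rw [← h2]
        refine Finset.sum_congr rfl fun r _ => ?_
        rw [hM]
        show uvec r * A (Fin.castLE hkk1 r) (cfun s) = _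
        rw [huvec]
        ring
      have huz : uvec = 0 := by
        have hinj := Matrix.vecMul_injective_iff_isUnit.mpr hMunit
        apply hinj
        show uvec ᵥ* M = (0 : Fin ((kk : ℕ) + 1) → F) ᵥ* M
        rw [hvm, Matrix.zero_vecMul]
      have hlastv : v kk t = 0 := by
        have h5 := congrFun huz (Fin.last (kk : ℕ))
        simp only [Pi.zero_apply] at h5
        have h6 : uvec (Fin.last (kk : ℕ)) = v kk t := by
          show v (Fin.castLE hkk1 (Fin.last (kk : ℕ))) t = v kk t
          congr 1
        rw [h6] at h5
        exact h5
      exact ht hlastv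
    -- counting
    set Tm : Finset (Fin m) := univ.filter (fun t => v kk t ≠ 0) with hTm
    have hdk : d kk ≤ Tm.card := by
      have : dminS ((C kk : Set (Fin m → F))) ≤ hammingNorm (v kk) :=
        Nat.sInf_le ⟨v kk, hvC kk, hvkk, rfl⟩
      rw [hd kk] at this
      exact this
    have hcount : Tm.card * (q ^ 2 - (kk : ℕ)) ≤ hammingNorm c0 := by
      set ff : Fin m → Finset (Fin (q ^ 2) × Fin m) :=
        fun t => (univ.filter fun j : Fin (q ^ 2) => c0 (j, t) ≠ 0).image (fun j => (j, t))
        with hff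
      set U : Finset (Fin (q ^ 2) × Fin m) := Tm.biUnion ff with hU
      have hdisj : ∀ t1 ∈ Tm, ∀ t2 ∈ Tm, t1 ≠ t2 → Disjoint (ff t1) (ff t2) := by
        intro t1 _ t2 _ hne
        rw [Finset.disjoint_left]
        intro y hy1 hy2
        rw [hff] at hy1 hy2
        rw [Finset.mem_image] at hy1 hy2
        obtain ⟨j1, _, rfl⟩ := hy1
        obtain ⟨j2, _, hy2e⟩ := hy2
        exact hne ((Prod.ext_iff.mp hy2e).2).symm
      have hUc : U.card = ∑ t ∈ Tm, (ff t).card := Finset.card_biUnion hdisj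
      have hste : ∀ t ∈ Tm, q ^ 2 - (kk : ℕ) ≤ (ff t).card := by
        intro t htm
        rw [hff]
        rw [Finset.card_image_of_injective _ (fun a b hab => (Prod.ext_iff.mp hab).1)]
        refine hclaim t ?_
        rw [hTm, Finset.mem_filter] at htm
        exact htm.2
      have hUcard : Tm.card * (q ^ 2 - (kk : ℕ)) ≤ U.card := by
        rw [hUc]
        calc Tm.card * (q ^ 2 - (kk : ℕ)) = ∑ _t ∈ Tm, (q ^ 2 - (kk : ℕ)) := by
              rw [Finset.sum_const, smul_eq_mul]
          _ ≤ ∑ t ∈ Tm, (ff t).card := Finset.sum_le_sum hste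
      have hUsub : U ⊆ univ.filter (fun y : Fin (q ^ 2) × Fin m => c0 y ≠ 0) := by
        intro y hy
        rw [hU, Finset.mem_biUnion] at hy
        obtain ⟨t, _, hy2⟩ := hy
        rw [Finset.mem_image] at hy2
        obtain ⟨j, hj, rfl⟩ := hy2
        rw [Finset.mem_filter] at hj ⊢
        exact ⟨Finset.mem_univ _, hj.2⟩
      calc Tm.card * (q ^ 2 - (kk : ℕ)) ≤ U.card := hUcard
        _ ≤ (univ.filter (fun y : Fin (q ^ 2) × Fin m => c0 y ≠ 0)).card :=
            Finset.card_le_card hUsub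
        _ = hammingNorm c0 := rfl
    have hfinal : d kk * (q ^ 2 - (kk : ℕ)) ≤ hammingNorm c0 :=
      le_trans (Nat.mul_le_mul_right _ hdk) hcount
    exact le_trans (Nat.sInf_le ⟨kk, rfl⟩) hfinal
end
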